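/- arXiv:1411.7341 — 5 statements merged into one kernel-verified Lean document; each statement's English description precedes it below -/
import Mathlib

section
/- Let A ∈ F[x_1,…,x_n] be a polynomial of individual degree at most d such that for every k with 1 ≤ k ≤ n, writing y_k = (x_1,…,x_k), the F-linear span of the coefficient polynomials {A_{(y_k,a)} : a ∈ {0,1,…,d}^k} has dimension at most w. Then A is computed by an ROABP of width w in the variable order (x_1,…,x_n); that is, there exist matrices D_1 ∈ F[x_1]^{1×w}, D_i ∈ F[x_i]^{w×w} for 2 ≤ i ≤ n−1, and D_n ∈ F[x_n]^{w×1} such that A = D_1·D_2⋯D_n. -/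
open MvPolynomial Matrix

noncomputable section

variable {F : Type*} [Field F]

/-- `p` only involves the variable `i` (it is a univariate polynomial in `x_i`). -/
def UnivariateIn {n : ℕ} (i : Fin n) (p : MvPolynomial (Fin n) F) : Prop :=
  ∀ m ∈ p.support, ∀ j : Fin n, j ≠ i → m j = 0

/-- The ordered product `D 0 * D 1 * ⋯ * D (n-1)` of the layer matrices of a branching program. -/
def layerProd {n w : ℕ} (D : Fin n → Matrix (Fin w) (Fin w) (MvPolynomial (Fin n) F)) :
    Matrix (Fin w) (Fin w) (MvPolynomial (Fin n) F) :=
  ((List.finRange n).map D).prod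

/-- The ordered product of the first `k` layer matrices. -/
def prefixProd {n w : ℕ} (k : ℕ)
    (D : Fin n → Matrix (Fin w) (Fin w) (MvPolynomial (Fin n) F)) :
    Matrix (Fin w) (Fin w) (MvPolynomial (Fin n) F) :=
  (((List.finRange n).take k).map D).prod

/-- `A` is computed by a read-once oblivious ABP of width `w` in variable order
`(x_{π 0}, …, x_{π (n-1)})`: `A = D₁ ⋯ Dₙ` where the entries of the `i`-th layer are
univariate polynomials in `x_{π i}`; the `1 × w` first layer and the `w × 1` last layer are
encoded by the constant selection vectors `u` and `v`. -/
def IsROABP {n : ℕ} (w : ℕ) (π : Equiv.Perm (Fin n)) (A : MvPolynomial (Fin n) F) : Prop :=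
  ∃ (u : Matrix (Fin 1) (Fin w) F) (D : Fin n → Matrix (Fin w) (Fin w) (MvPolynomial (Fin n) F))
    (v : Matrix (Fin w) (Fin 1) F),
    (∀ i r c, UnivariateIn (π i) (D i r c)) ∧
      A = (u.map (MvPolynomial.C (σ := Fin n)) * layerProd D * v.map (MvPolynomial.C (σ := Fin n)) :
        Matrix (Fin 1) (Fin 1) (MvPolynomial (Fin n) F)) 0 0

/-- The vector polynomial `P ∈ F[x]^{1×w}` is computed by an ROABP of width `w`
in variable order `π`. -/
def IsVecROABP {n : ℕ} (w : ℕ) (π : Equiv.Perm (Fin n))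
    (P : Fin w → MvPolynomial (Fin n) F) : Prop :=
  ∃ (u : Matrix (Fin 1) (Fin w) F) (D : Fin n → Matrix (Fin w) (Fin w) (MvPolynomial (Fin n) F)),
    (∀ i r c, UnivariateIn (π i) (D i r c)) ∧
      ∀ j, P j = (u.map (MvPolynomial.C) * layerProd D :
        Matrix (Fin 1) (Fin w) (MvPolynomial (Fin n) F)) 0 j

/-- The matrix polynomial `A ∈ F^{w×w}[x]` is computed by an ROABP of width `w`
in variable order `π`. -/
def IsMatROABP {n : ℕ} (w : ℕ) (π : Equiv.Perm (Fin n))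
    (A : Matrix (Fin w) (Fin w) (MvPolynomial (Fin n) F)) : Prop :=
  ∃ D : Fin n → Matrix (Fin w) (Fin w) (MvPolynomial (Fin n) F),
    (∀ i r c, UnivariateIn (π i) (D i r c)) ∧ A = layerProd D

/-- `A` has individual degree at most `d` in every variable. -/
def IndivDegLE {n : ℕ} (d : ℕ) (A : MvPolynomial (Fin n) F) : Prop :=
  ∀ m ∈ A.support, ∀ i, m i ≤ d

/-- The set of the first `k` variables `y_k = (x_0, …, x_{k-1})`. -/
def prefixFinset (n k : ℕ) : Finset (Fin n) := Finset.univ.filter fun i => (i : ℕ) < k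

/-- The coefficient polynomial `A_{(y,a)} ∈ F[z]`: the coefficient of the monomial `y^a`
when `A` is written as a polynomial in the variables `y` (those in `S`) with coefficients
in the remaining variables `z`. -/
def coeffWrt {n : ℕ} (S : Finset (Fin n)) (a : Fin n → ℕ) (A : MvPolynomial (Fin n) F) :
    MvPolynomial (Fin n) F :=
  ∑ m ∈ A.support.filter (fun m => ∀ i ∈ S, m i = a i),
    MvPolynomial.monomial (m.filter fun i => i ∉ S) (A.coeff m)

/-- The exponent vector supported on `S` with values given by `a`. -/
def expOn {n : ℕ} (S : Finset (Fin n)) (a : Fin n → ℕ) : Fin n →₀ ℕ :=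
  Finsupp.equivFunOnFinite.symm fun i => if i ∈ S then a i else 0

/-- A family of coefficients (of a polynomial over the `K`-vector space `V`) is
`ℓ`-concentrated over `K` if every coefficient lies in the `K`-span of the coefficients
of monomials of support `< ℓ`. -/
def Concentrated (K : Type*) [Field K] {V : Type*} [AddCommGroup V] [Module K V] {n : ℕ}
    (ℓ : ℕ) (cf : (Fin n →₀ ℕ) → V) : Prop :=
  ∀ a : Fin n →₀ ℕ, cf a ∈ Submodule.span K (cf '' {b | b.support.card < ℓ})

/-- The polynomial `A(x + f(t))`, with coefficients viewed in the rational function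
field `F(t)`. -/
def shiftBy {n : ℕ} (f : Fin n → Polynomial F) (A : MvPolynomial (Fin n) F) :
    MvPolynomial (Fin n) (RatFunc F) :=
  MvPolynomial.aeval
    (fun i => MvPolynomial.X i +
      MvPolynomial.C (algebraMap (Polynomial F) (RatFunc F) (f i))) A

/-- The polynomial `A(x + g(y,t))` for a bivariate shift `g ∈ F[y,t]^n`
(encoded with `y` the outer and `t` the inner variable), with coefficients viewed in the
rational function field `F(y,t)`. -/
def shiftBy₂ {n : ℕ} (g : Fin n → Polynomial (Polynomial F)) (A : MvPolynomial (Fin n) F) :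
    MvPolynomial (Fin n) (RatFunc (RatFunc F)) :=
  MvPolynomial.aeval
    (fun i => MvPolynomial.X i +
      MvPolynomial.C (algebraMap (Polynomial (RatFunc F)) (RatFunc (RatFunc F))
        ((g i).map (algebraMap (Polynomial F) (RatFunc F))))) A

end

noncomputable section AuxProofs

variable {F : Type*} [Field F] {n d w : ℕ}

lemma mem_prefixFinset {k : ℕ} {i : Fin n} : i ∈ prefixFinset n k ↔ (i : ℕ) < k := by
  simp [prefixFinset]

def cwLin (S : Finset (Fin n)) (a : Fin n → ℕ) :
    MvPolynomial (Fin n) F →ₗ[F] MvPolynomial (Fin n) F :=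
  Finsupp.lsum F (fun (m : Fin n →₀ ℕ) => if ∀ i ∈ S, m i = a i then
     (MvPolynomial.monomial (m.filter fun i => i ∉ S) : F →ₗ[F] MvPolynomial (Fin n) F) else 0)
    ∘ₗ (AddMonoidAlgebra.coeffLinearEquiv F).toLinearMap

lemma cwLin_monomial (S : Finset (Fin n)) (a : Fin n → ℕ) (m : Fin n →₀ ℕ) (c : F) :
    cwLin S a (monomial m c) = if ∀ i ∈ S, m i = a i then
      (monomial (m.filter fun i => i ∉ S)) c else 0 := by
  show Finsupp.lsum F _ (Finsupp.single m c) = _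
  rw [Finsupp.lsum_single]
  split <;> rfl

lemma coeffWrt_eq_cwLin (S : Finset (Fin n)) (a : Fin n → ℕ) (P : MvPolynomial (Fin n) F) :
    coeffWrt S a P = cwLin S a P := by
  show _ = Finsupp.lsum F _ (AddMonoidAlgebra.coeff P)
  rw [Finsupp.lsum_apply, Finsupp.sum]
  rw [coeffWrt, Finset.sum_filter]
  apply Finset.sum_congr rfl
  intro m hm
  split <;> rfl

lemma cwLin_coeffWrt {k : ℕ} (hk : k < n) (a : Fin n → ℕ) (b : ℕ)
    (A : MvPolynomial (Fin n) F) :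
    cwLin {(⟨k, hk⟩ : Fin n)} (fun _ => b) (coeffWrt (prefixFinset n k) a A) =
      coeffWrt (prefixFinset n (k + 1)) (Function.update a ⟨k, hk⟩ b) A := by
  set κ : Fin n := ⟨k, hk⟩ with hκdef
  have hκval : (κ : ℕ) = k := rfl
  rw [coeffWrt, map_sum]
  simp only [cwLin_monomial]
  rw [← Finset.sum_filter, Finset.filter_filter, coeffWrt]
  have hκmem : κ ∉ prefixFinset n k := by
    rw [mem_prefixFinset, hκval]; omega
  refine Finset.sum_congr ?_ ?_
  · ext m
    simp only [Finset.mem_filter, Finset.mem_singleton]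
    constructor
    · rintro ⟨hs, h1, h2⟩
      refine ⟨hs, fun i hi => ?_⟩
      rw [mem_prefixFinset] at hi
      rcases Nat.lt_succ_iff_lt_or_eq.1 hi with hi' | hi'
      · rw [Function.update_apply, if_neg (by rintro rfl; rw [hκval] at hi'; omega)]
        exact h1 i (mem_prefixFinset.2 hi')
      · have hiκ : i = κ := Fin.ext (by rw [hi', hκval])
        subst hiκ
        rw [Function.update_self]
        have h3 := h2 κ rfl
        rwa [Finsupp.filter_apply, if_pos hκmem] at h3
    · rintro ⟨hs, h⟩
      refine ⟨hs, fun i hi => ?_, fun i hi => ?_⟩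
      · have hik : (i : ℕ) < k := mem_prefixFinset.1 hi
        have h3 := h i (mem_prefixFinset.2 (Nat.lt_succ_of_lt hik))
        rwa [Function.update_apply, if_neg (by rintro rfl; rw [hκval] at hik; omega)] at h3
      · subst hi
        rw [Finsupp.filter_apply, if_pos hκmem]
        have h3 := h κ (mem_prefixFinset.2 (by rw [hκval]; omega))
        rwa [Function.update_self] at h3
  · intro m _
    have hexp : Finsupp.filter (fun i => i ∉ ({κ} : Finset (Fin n)))
        (Finsupp.filter (fun i => i ∉ prefixFinset n k) m) =
        Finsupp.filter (fun i => i ∉ prefixFinset n (k + 1)) m := by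
      ext i
      simp only [Finsupp.filter_apply, Finset.mem_singleton, mem_prefixFinset,
        Fin.ext_iff, hκval]
      split_ifs <;> omega
    rw [hexp]

lemma expand_coeffWrt (κ : Fin n) (P : MvPolynomial (Fin n) F)
    (h : ∀ m ∈ P.support, m κ ≤ d) :
    P = ∑ b ∈ Finset.range (d + 1), X κ ^ b * coeffWrt {κ} (fun _ => b) P := by
  have key : ∀ b : ℕ, X κ ^ b * coeffWrt {κ} (fun _ => b) P =
      ∑ m ∈ P.support.filter (fun m => m κ = b), monomial m (P.coeff m) := by
    intro b
    rw [coeffWrt, Finset.mul_sum]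
    have hfil : P.support.filter (fun m => ∀ i ∈ ({κ} : Finset (Fin n)), m i = (fun _ => b) i)
        = P.support.filter (fun m => m κ = b) := by
      apply Finset.filter_congr; intro m _; simp
    rw [hfil]
    apply Finset.sum_congr rfl
    intro m hm
    rw [Finset.mem_filter] at hm
    rw [X_pow_eq_monomial, monomial_mul, one_mul]
    have hexp : Finsupp.single κ b + Finsupp.filter (fun i => i ∉ ({κ} : Finset (Fin n))) m
        = m := by
      ext i
      simp only [Finsupp.add_apply, Finsupp.single_apply, Finsupp.filter_apply,
        Finset.mem_singleton]
      by_cases hi : κ = i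
      · subst hi; simp [hm.2]
      · have hi' : ¬ i = κ := fun hh => hi hh.symm
        simp [hi, hi']
    rw [hexp]
  rw [Finset.sum_congr rfl (fun b _ => key b),
    Finset.sum_fiberwise_of_maps_to (fun m hm => Finset.mem_range.2 (Nat.lt_succ_of_le (h m hm)))]
  exact (support_sum_monomial_coeff P).symm

def goodSub (k d : ℕ) : Submodule F (MvPolynomial (Fin n) F) where
  carrier := {P | ∀ m ∈ P.support, (∀ i : Fin n, (i : ℕ) < k → m i = 0) ∧ ∀ i, m i ≤ d}
  zero_mem' := by simp
  add_mem' := by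
    intro P Q hP hQ m hm
    rcases Finset.mem_union.1 (support_add hm) with h | h
    exacts [hP m h, hQ m h]
  smul_mem' := by
    intro c P hP m hm
    exact hP m (support_smul hm)

def Vspace (A : MvPolynomial (Fin n) F) (d k : ℕ) : Submodule F (MvPolynomial (Fin n) F) :=
  Submodule.span F {P | ∃ a : Fin n → ℕ, (∀ i, a i ≤ d) ∧ P = coeffWrt (prefixFinset n k) a A}

lemma V_le_good (A : MvPolynomial (Fin n) F) (hdeg : IndivDegLE d A) (k : ℕ) :
    Vspace A d k ≤ goodSub k d := by
  rw [Vspace, Submodule.span_le]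
  rintro P ⟨a, -, rfl⟩
  intro m hm
  rw [coeffWrt] at hm
  obtain ⟨m', hm', hmm⟩ := Finset.mem_biUnion.1 (support_sum hm)
  have hmeq : m = m'.filter fun i => i ∉ prefixFinset n k :=
    Finset.mem_singleton.1 (support_monomial_subset hmm)
  subst hmeq
  constructor
  · intro i hi
    rw [Finsupp.filter_apply, if_neg (by simp [mem_prefixFinset, hi])]
  · intro i
    rw [Finsupp.filter_apply]
    have := hdeg m' (Finset.mem_filter.1 hm').1 i
    split <;> omega

lemma coeffWrt_single_mem {k : ℕ} (hk : k < n) {A : MvPolynomial (Fin n) F}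
    {P : MvPolynomial (Fin n) F} (hP : P ∈ Vspace A d k) {b : ℕ} (hb : b ≤ d) :
    coeffWrt {(⟨k, hk⟩ : Fin n)} (fun _ => b) P ∈ Vspace A d (k + 1) := by
  rw [coeffWrt_eq_cwLin]
  have hle : Vspace A d k ≤
      (Vspace A d (k + 1)).comap (cwLin {(⟨k, hk⟩ : Fin n)} (fun _ => b)) := by
    rw [Vspace, Submodule.span_le]
    rintro Q ⟨a, ha, rfl⟩
    simp only [Set.mem_setOf_eq, SetLike.mem_coe, Submodule.mem_comap]
    rw [cwLin_coeffWrt hk a b A]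
    refine Submodule.subset_span ⟨Function.update a ⟨k, hk⟩ b, fun i => ?_, rfl⟩
    rw [Function.update_apply]
    split
    · exact hb
    · exact ha i
  exact hle hP

lemma eq_C_of_good (P : MvPolynomial (Fin n) F)
    (h : ∀ m ∈ P.support, ∀ i : Fin n, (i : ℕ) < n → m i = 0) :
    P = C (P.coeff 0) := by
  ext m
  rw [coeff_C]
  by_cases hm : m = 0
  · subst hm; simp
  · rw [if_neg (fun h0 => hm h0.symm)]
    by_contra hc
    have hms : m ∈ P.support := by simpa [MvPolynomial.mem_support_iff] using hc
    exact hm (Finsupp.ext fun i => h m hms i i.isLt)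

lemma A_eq_zero (A : MvPolynomial (Fin n) F) (hdeg : IndivDegLE d A)
    (h : Vspace A d n = ⊥) : A = 0 := by
  by_contra hA
  obtain ⟨m, hm⟩ := support_nonempty.2 hA
  have hgen : coeffWrt (prefixFinset n n) (fun i => m i) A ∈ Vspace A d n :=
    Submodule.subset_span ⟨fun i => m i, fun i => hdeg m hm i, rfl⟩
  rw [h, Submodule.mem_bot] at hgen
  have hval : coeffWrt (prefixFinset n n) (fun i => m i) A =
      monomial (m.filter fun i => i ∉ prefixFinset n n) (A.coeff m) := by
    rw [coeffWrt]
    have hfil : A.support.filter (fun m' => ∀ i ∈ prefixFinset n n, m' i = m i) = {m} := by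
      ext m'
      simp only [Finset.mem_filter, Finset.mem_singleton]
      constructor
      · rintro ⟨hs, hall⟩
        exact Finsupp.ext fun i => hall i (mem_prefixFinset.2 i.isLt)
      · rintro rfl; exact ⟨hm, fun i _ => rfl⟩
    rw [hfil, Finset.sum_singleton]
  rw [hval] at hgen
  exact mem_support_iff.1 hm (monomial_eq_zero.1 hgen)

lemma coeffWrt_prefix_zero (a : Fin n → ℕ) (A : MvPolynomial (Fin n) F) :
    coeffWrt (prefixFinset n 0) a A = A := by
  have h0 : prefixFinset n 0 = ∅ := by
    ext i; simp [mem_prefixFinset]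
  rw [coeffWrt, h0]
  have : A.support.filter (fun m => ∀ i ∈ (∅ : Finset (Fin n)), m i = a i) = A.support := by
    apply Finset.filter_true_of_mem; intro m _; simp
  rw [this]
  have hf : ∀ m : Fin n →₀ ℕ, (m.filter fun i => i ∉ (∅ : Finset (Fin n))) = m := by
    intro m; ext i; simp [Finsupp.filter_apply]
  rw [Finset.sum_congr rfl fun m _ => by rw [hf m]]
  exact support_sum_monomial_coeff A


lemma exists_spanning_fun {F M : Type*} [Field F] [AddCommGroup M] [Module F M]
    (V : Submodule F M) {w : ℕ} (h : Module.rank F V ≤ w) :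
    ∃ B : Fin w → M, (∀ j, B j ∈ V) ∧ V ≤ Submodule.span F (Set.range B) := by
  have hfin : Module.Finite F V := by
    rw [← Module.rank_lt_aleph0_iff]
    exact h.trans_lt (Cardinal.nat_lt_aleph0 w)
  set r := Module.finrank F V with hr
  have hrw : r ≤ w := Module.finrank_le_of_rank_le h
  let b := Module.finBasis F V
  refine ⟨fun j => if hj : (j : ℕ) < r then (b ⟨j, hj⟩ : M) else 0, ?_, ?_⟩
  · intro j
    dsimp only
    split
    · exact (b _).2
    · exact V.zero_mem
  · have hV : V = Submodule.span F (Set.range fun i : Fin r => (b i : M)) := by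
      have h2 : Submodule.span F (Set.range fun i : Fin r => (b i : M)) =
          Submodule.map V.subtype (Submodule.span F (Set.range b)) := by
        rw [Submodule.map_span]
        congr 1
        ext x
        simp [Set.range_comp]
        exact Iff.rfl
      rw [h2, b.span_eq, Submodule.map_top, Submodule.range_subtype]
    refine le_trans hV.le (Submodule.span_mono ?_)
    rintro x ⟨i, rfl⟩
    refine ⟨Fin.castLE hrw i, ?_⟩
    simp [Fin.is_lt]

def tProd (k : ℕ) (D : Fin n → Matrix (Fin w) (Fin w) (MvPolynomial (Fin n) F)) :
    Matrix (Fin w) (Fin w) (MvPolynomial (Fin n) F) :=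
  (((List.finRange n).drop k).map D).prod

lemma tProd_n (D : Fin n → Matrix (Fin w) (Fin w) (MvPolynomial (Fin n) F)) :
    tProd n D = 1 := by
  rw [tProd]
  rw [show (List.finRange n).drop n = [] by
    apply List.drop_eq_nil_of_le; simp]
  simp

lemma tProd_succ {k : ℕ} (hk : k < n)
    (D : Fin n → Matrix (Fin w) (Fin w) (MvPolynomial (Fin n) F)) :
    tProd k D = D ⟨k, hk⟩ * tProd (k + 1) D := by
  rw [tProd, List.drop_eq_getElem_cons (by simpa using hk), List.map_cons, List.prod_cons, tProd]
  congr 1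
  simp [List.getElem_finRange, Fin.cast]

lemma mem_drop_ge {k : ℕ} {i : Fin n} (h : i ∈ (List.finRange n).drop k) :
    k ≤ (i : ℕ) := by
  obtain ⟨j, hj, hji⟩ := List.mem_drop_iff_getElem.1 h
  have hj' : j + k < n := by simpa using hj
  have : ((List.finRange n)[k + j]'(by simp; omega) : Fin n) = i := hji
  rw [List.getElem_finRange] at this
  rw [← this]
  simp [Fin.cast]

lemma tProd_update {k : ℕ} (hk : k < n)
    (D : Fin n → Matrix (Fin w) (Fin w) (MvPolynomial (Fin n) F))
    (M : Matrix (Fin w) (Fin w) (MvPolynomial (Fin n) F)) :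
    tProd (k + 1) (Function.update D ⟨k, hk⟩ M) = tProd (k + 1) D := by
  rw [tProd, tProd]
  congr 1
  apply List.map_congr_left
  intro i hi
  have hgi : k + 1 ≤ (i : ℕ) := mem_drop_ge hi
  rw [Function.update_apply, if_neg]
  rintro rfl
  simp only [Fin.val_mk] at hgi
  omega

lemma univariateIn_sum (κ : Fin n) (c : ℕ → F) :
    UnivariateIn κ (∑ b ∈ Finset.range (d + 1),
      monomial (Finsupp.single κ b) (c b) : MvPolynomial (Fin n) F) := by
  intro m hm j hj
  obtain ⟨b, _, hmb⟩ := Finset.mem_biUnion.1 (support_sum hm)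
  have : m = Finsupp.single κ b := Finset.mem_singleton.1 (support_monomial_subset hmb)
  subst this
  rw [Finsupp.single_apply, if_neg (fun hh => hj hh.symm)]

lemma univariateIn_one (κ : Fin n) (r c : Fin w) :
    UnivariateIn κ ((1 : Matrix (Fin w) (Fin w) (MvPolynomial (Fin n) F)) r c) := by
  intro m hm j hj
  rw [Matrix.one_apply] at hm
  split_ifs at hm
  · have h1 : ((1 : MvPolynomial (Fin n) F)).support ⊆ {0} := by
      rw [show (1 : MvPolynomial (Fin n) F) = monomial 0 1 by simp]
      exact support_monomial_subset
    have := Finset.mem_singleton.1 (h1 hm)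
    subst this
    rfl
  · simp at hm

lemma claim (A : MvPolynomial (Fin n) F) (hdeg : IndivDegLE d A)
    (hdim : ∀ k, 1 ≤ k → k ≤ n → Module.rank F ↥(Vspace A d k) ≤ w) :
    ∀ (m k : ℕ), k + m = n → ∀ B : Fin w → MvPolynomial (Fin n) F,
      (∀ j, B j ∈ Vspace A d k) →
      ∃ (D : Fin n → Matrix (Fin w) (Fin w) (MvPolynomial (Fin n) F))
        (v : Matrix (Fin w) (Fin 1) F),
        (∀ i r c, UnivariateIn i (D i r c)) ∧
        ∀ j, B j = (tProd k D * v.map (C : F → MvPolynomial (Fin n) F)) j 0 := by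
  intro m
  induction m with
  | zero =>
    intro k hk B hB
    have hkn : n = k := by omega
    subst hkn
    refine ⟨fun _ => 1, Matrix.of fun j _ => (B j).coeff 0,
      fun i r c => univariateIn_one i r c, ?_⟩
    intro j
    rw [tProd_n, Matrix.one_mul]
    have hg := V_le_good A hdeg n (hB j)
    have hBj : B j = C ((B j).coeff 0) := eq_C_of_good _ (fun m hm i hi => (hg m hm).1 i hi)
    rw [hBj]
    simp [Matrix.map_apply]
  | succ m ih =>
    intro k hk B hB
    have hkn : k < n := by omega
    set κ : Fin n := ⟨k, hkn⟩ with hκdef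
    obtain ⟨B', hB'mem, hB'span⟩ :=
      exists_spanning_fun (Vspace A d (k + 1)) (hdim (k + 1) (by omega) (by omega))
    have hchoice : ∀ (j : Fin w) (b : ℕ), b ≤ d → ∃ cc : Fin w → F,
        ∑ i, cc i • B' i = coeffWrt {κ} (fun _ => b) (B j) :=
      fun j b hb => (Submodule.mem_span_range_iff_exists_fun F).1
        (hB'span (coeffWrt_single_mem hkn (hB j) hb))
    choose cf hcf using hchoice
    set c : Fin w → ℕ → Fin w → F := fun j b => if hb : b ≤ d then cf j b hb else 0 with hcdef
    have hc : ∀ (j : Fin w) (b : ℕ), b ≤ d →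
        ∑ i, c j b i • B' i = coeffWrt {κ} (fun _ => b) (B j) := by
      intro j b hb
      simp only [hcdef, dif_pos hb]
      exact hcf j b hb
    obtain ⟨D', v, hD'uni, hD'⟩ := ih (k + 1) (by omega) B' hB'mem
    set M : Matrix (Fin w) (Fin w) (MvPolynomial (Fin n) F) :=
      Matrix.of fun j i => ∑ b ∈ Finset.range (d + 1),
        monomial (Finsupp.single κ b) (c j b i) with hMdef
    refine ⟨Function.update D' κ M, v, ?_, ?_⟩
    · intro i r c'
      rw [Function.update_apply]
      split
      · next h =>
        rw [h]
        exact univariateIn_sum κ (fun b => c r b c')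
      · exact hD'uni i r c'
    · intro j
      have hBkey : B j = ∑ i, M j i * B' i := by
        have hdegB : ∀ m' ∈ (B j).support, m' κ ≤ d :=
          fun m' hm' => ((V_le_good A hdeg k (hB j)) m' hm').2 κ
        rw [expand_coeffWrt κ (B j) hdegB]
        have step1 : ∀ b ∈ Finset.range (d + 1),
            X κ ^ b * coeffWrt {κ} (fun _ => b) (B j) =
            ∑ i, monomial (Finsupp.single κ b) (c j b i) * B' i := by
          intro b hb
          rw [← hc j b (Nat.lt_succ_iff.1 (Finset.mem_range.1 hb)), Finset.mul_sum]
          apply Finset.sum_congr rfl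
          intro i _
          rw [smul_eq_C_mul, ← mul_assoc, mul_comm (X κ ^ b) (C (c j b i)),
            C_mul_X_pow_eq_monomial]
        rw [Finset.sum_congr rfl step1, Finset.sum_comm]
        apply Finset.sum_congr rfl
        intro i _
        rw [← Finset.sum_mul]
        rfl
      rw [hBkey, tProd_succ hkn, Function.update_self, tProd_update hkn,
        Matrix.mul_assoc, Matrix.mul_apply]
      exact Finset.sum_congr rfl fun i _ => by rw [hD' i]

theorem main_aux
    (hn : 0 < n)
    (A : MvPolynomial (Fin n) F)
    (hdeg : IndivDegLE d A)
    (hdim : ∀ k, 1 ≤ k → k ≤ n →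
      Module.rank F ↥(Submodule.span F
        {P : MvPolynomial (Fin n) F |
          ∃ a : Fin n → ℕ, (∀ i, a i ≤ d) ∧ P = coeffWrt (prefixFinset n k) a A}) ≤ w) :
    ∃ (u : Matrix (Fin 1) (Fin w) F)
      (D : Fin n → Matrix (Fin w) (Fin w) (MvPolynomial (Fin n) F))
      (v : Matrix (Fin w) (Fin 1) F),
      (∀ i r c, UnivariateIn i (D i r c)) ∧
        A = (u.map (MvPolynomial.C (σ := Fin n)) * (((List.finRange n).map D).prod) * v.map (MvPolynomial.C (σ := Fin n)) :
          Matrix (Fin 1) (Fin 1) (MvPolynomial (Fin n) F)) 0 0 := by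
  have hdim' : ∀ k, 1 ≤ k → k ≤ n → Module.rank F ↥(Vspace A d k) ≤ w := hdim
  rcases Nat.eq_zero_or_pos w with hw | hw
  · subst hw
    have hA : A = 0 := by
      apply A_eq_zero A hdeg
      have h0 := hdim' n hn le_rfl
      have : Module.rank F ↥(Vspace A d n) = 0 := le_antisymm (by simpa using h0) zero_le
      exact Submodule.rank_eq_zero.1 this
    refine ⟨0, fun _ => 1, 0, fun i r c => r.elim0, ?_⟩
    rw [hA, Matrix.mul_apply]
    symm
    apply Finset.sum_eq_zero
    intro i _
    exact i.elim0
  · have hA0 : A ∈ Vspace A d 0 := by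
      have hA0' : A = coeffWrt (prefixFinset n 0) (fun _ => 0) A :=
        (coeffWrt_prefix_zero _ A).symm
      exact Submodule.subset_span ⟨fun _ => 0, fun i => Nat.zero_le d, hA0'⟩
    set z : Fin w := ⟨0, hw⟩ with hzdef
    set B : Fin w → MvPolynomial (Fin n) F := fun j => if j = z then A else 0 with hBdef
    obtain ⟨D, v, hDuni, hEq⟩ := claim A hdeg hdim' n 0 (by omega) B
      (fun j => by
        rw [hBdef]
        dsimp only
        split
        · exact hA0
        · exact Submodule.zero_mem _)
    refine ⟨Matrix.of fun _ j => if j = z then 1 else 0, D, v, hDuni, ?_⟩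
    have hlayer : ((List.finRange n).map D).prod = tProd 0 D := by rw [tProd, List.drop_zero]
    rw [hlayer, Matrix.mul_assoc, Matrix.mul_apply]
    rw [show A = B z by rw [hBdef]; simp]
    rw [hEq z]
    rw [Finset.sum_eq_single z]
    · simp [Matrix.map_apply]
    · intro i _ hi
      simp [Matrix.map_apply, hi]
    · simp
end AuxProofs


/-- Nisan; converse of Lemma 2.2: if for every `1 ≤ k ≤ n` the `F`-span of
the prefix coefficient polynomials `A_{(y_k, a)}`, `a ∈ {0,…,d}^k`, has dimension at most `w`,
then `A` is computed by an ROABP of width `w` in the variable order `(x_1, …, x_n)`. -/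
theorem isROABP_of_prefix_coeff_span_rank_le
    {F : Type*} [Field F] {n w d : ℕ} (hn : 0 < n)
    (A : MvPolynomial (Fin n) F)
    (hdeg : IndivDegLE d A)
    (hdim : ∀ k, 1 ≤ k → k ≤ n →
      Module.rank F ↥(Submodule.span F
        {P : MvPolynomial (Fin n) F |
          ∃ a : Fin n → ℕ, (∀ i, a i ≤ d) ∧ P = coeffWrt (prefixFinset n k) a A}) ≤ w) :
    IsROABP w (Equiv.refl (Fin n)) A := by
  obtain ⟨u, D, v, h1, h2⟩ := main_aux hn A hdeg hdim
  exact ⟨u, D, v, fun i r c => h1 i r c, h2⟩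
end

section
/- Let A ∈ F[x_1,…,x_n] be a polynomial of individual degree at most d such that for every k with 1 ≤ k ≤ n−1, writing y_k = (x_1,…,x_k), the F-linear span of {A_{(y_k,a)} : a ∈ {0,1,…,d}^k} has dimension exactly w (and the dimension for k = n is 1). Then there exist matrices D_1 ∈ F[x_1]^{1×w}, D_i ∈ F[x_i]^{w×w} for 2 ≤ i ≤ n−1, and D_n ∈ F[x_n]^{w×1} with A = D_1·D_2⋯D_n such that for every k ∈ {1,…,n−1} and every ℓ ∈ {1,…,w}, there is an exponent a ∈ {0,1,…,d}^k with coeff_{P_k}(y_k^a) = e_ℓ, where P_k = D_1·D_2⋯D_k ∈ F[y_k]^{1×w}, coeff_{P_k}(y_k^a) ∈ F^{1×w} is the (entrywise) coefficient of the monomial y_k^a in P_k, and e_ℓ is the ℓ-th standard unit row vector. In particular, the F-span of the coefficients of P_k is all of F^{1×w}. -/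
open MvPolynomial Matrix

noncomputable section Aux
namespace RoabpAux
open MvPolynomial

variable {F : Type*} [Field F] {n d : ℕ}

lemma expOn_apply (S : Finset (Fin n)) (a : Fin n → ℕ) (i : Fin n) :
    expOn S a i = if i ∈ S then a i else 0 := rfl

lemma expOn_coe_eq_self (S : Finset (Fin n)) (m : Fin n →₀ ℕ)
    (hm : ∀ i ∉ S, m i = 0) : expOn S ⇑m = m := by
  ext i
  rw [expOn_apply]
  by_cases h : i ∈ S
  · rw [if_pos h]
  · rw [if_neg h, hm i h]

lemma coeff_coeffWrt (S : Finset (Fin n)) (a : Fin n → ℕ) (A : MvPolynomial (Fin n) F)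
    (μ : Fin n →₀ ℕ) :
    (coeffWrt S a A).coeff μ =
      if ∀ i ∈ S, μ i = 0 then A.coeff (μ + expOn S a) else 0 := by
  classical
  have huniq : ∀ m : Fin n →₀ ℕ, (∀ i ∈ S, m i = a i) →
      (m.filter fun i => i ∉ S) = μ → m = μ + expOn S a := by
    intro m hm hfil
    have h1 : m.filter (fun i => i ∈ S) = expOn S a := by
      ext i
      rw [Finsupp.filter_apply, expOn_apply]
      by_cases h : i ∈ S
      · rw [if_pos h, if_pos h, hm i h]
      · rw [if_neg h, if_neg h]
    have h2 := (Finsupp.filter_pos_add_filter_neg m (fun i => i ∈ S)).symm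
    rw [h1] at h2
    rw [h2, hfil, add_comm]
  unfold coeffWrt
  rw [MvPolynomial.coeff_sum]
  split_ifs with hμ
  · -- μ is off S
    have hm₀S : ∀ i ∈ S, (μ + expOn S a) i = a i := by
      intro i hi
      rw [Finsupp.add_apply, hμ i hi, expOn_apply, if_pos hi, zero_add]
    have hfil₀ : ((μ + expOn S a).filter fun i => i ∉ S) = μ := by
      ext i
      rw [Finsupp.filter_apply]
      by_cases h : i ∈ S
      · rw [if_neg (by simp [h]), hμ i h]
      · rw [if_pos h, Finsupp.add_apply, expOn_apply, if_neg h, add_zero]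
    by_cases hmem : μ + expOn S a ∈ A.support.filter (fun m => ∀ i ∈ S, m i = a i)
    · rw [Finset.sum_eq_single_of_mem _ hmem]
      · rw [coeff_monomial, if_pos hfil₀]
      · intro m hm hne
        rw [coeff_monomial]
        split_ifs with h
        · exact absurd (huniq m (Finset.mem_filter.mp hm).2 h) hne
        · rfl
    · have h0 : A.coeff (μ + expOn S a) = 0 := by
        by_contra hc
        exact hmem (Finset.mem_filter.mpr ⟨MvPolynomial.mem_support_iff.mpr hc, hm₀S⟩)
      rw [h0]
      apply Finset.sum_eq_zero
      intro m hm
      rw [coeff_monomial]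
      split_ifs with h
      · exact absurd ((huniq m (Finset.mem_filter.mp hm).2 h) ▸ hm) hmem
      · rfl
  · apply Finset.sum_eq_zero
    intro m hm
    rw [coeff_monomial]
    split_ifs with h
    · exfalso
      push_neg at hμ
      obtain ⟨i, hi, hine⟩ := hμ
      apply hine
      rw [← h, Finsupp.filter_apply, if_neg (by simp [hi])]
    · rfl

lemma support_coeffWrt (S : Finset (Fin n)) (a : Fin n → ℕ) (A : MvPolynomial (Fin n) F) :
    ∀ μ ∈ (coeffWrt S a A).support, ∀ i ∈ S, μ i = 0 := by
  intro μ hμ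
  by_contra hc
  push_neg at hc
  rw [MvPolynomial.mem_support_iff, coeff_coeffWrt, if_neg (by push_neg; exact hc)] at hμ
  exact hμ rfl

lemma coeffWrt_congr (S : Finset (Fin n)) {a b : Fin n → ℕ} (A : MvPolynomial (Fin n) F)
    (h : ∀ i ∈ S, a i = b i) : coeffWrt S a A = coeffWrt S b A := by
  classical
  apply MvPolynomial.ext
  intro μ
  rw [coeff_coeffWrt, coeff_coeffWrt]
  have : expOn S a = expOn S b := by
    ext i
    rw [expOn_apply, expOn_apply]
    by_cases hi : i ∈ S
    · rw [if_pos hi, if_pos hi, h i hi]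
    · rw [if_neg hi, if_neg hi]
  rw [this]

lemma coeffWrt_empty (a : Fin n → ℕ) (A : MvPolynomial (Fin n) F) :
    coeffWrt (∅ : Finset (Fin n)) a A = A := by
  classical
  apply MvPolynomial.ext
  intro μ
  rw [coeff_coeffWrt, if_pos (by simp)]
  congr 1
  have : expOn (∅ : Finset (Fin n)) a = 0 := by
    ext i; rw [expOn_apply, if_neg (by simp)]; rfl
  rw [this, add_zero]

lemma coeffWrt_add (S : Finset (Fin n)) (a : Fin n → ℕ) (A B : MvPolynomial (Fin n) F) :
    coeffWrt S a (A + B) = coeffWrt S a A + coeffWrt S a B := by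
  classical
  apply MvPolynomial.ext
  intro μ
  rw [MvPolynomial.coeff_add, coeff_coeffWrt, coeff_coeffWrt, coeff_coeffWrt,
    MvPolynomial.coeff_add]
  split_ifs <;> simp

lemma coeffWrt_sum {ι : Type*} (s : Finset ι) (g : ι → MvPolynomial (Fin n) F)
    (S : Finset (Fin n)) (a : Fin n → ℕ) :
    coeffWrt S a (∑ x ∈ s, g x) = ∑ x ∈ s, coeffWrt S a (g x) := by
  classical
  induction s using Finset.induction_on with
  | empty =>
      simp only [Finset.sum_empty]
      apply MvPolynomial.ext
      intro μ
      rw [coeff_coeffWrt]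
      split_ifs <;> simp
  | insert x s hx ih =>
      rw [Finset.sum_insert hx, Finset.sum_insert hx, coeffWrt_add, ih]

end RoabpAux
end Aux
namespace RoabpAux
open MvPolynomial

variable {F : Type*} [Field F] {n d : ℕ}

lemma mem_Iic_expOn {U : Finset (Fin n)} {e : Fin n →₀ ℕ} :
    e ∈ Finset.Iic (expOn U fun _ => d) ↔ (∀ i, e i ≤ d) ∧ ∀ i ∉ U, e i = 0 := by
  rw [Finset.mem_Iic, Finsupp.le_def]
  constructor
  · intro h
    constructor
    · intro i
      refine (h i).trans ?_
      rw [expOn_apply]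
      split_ifs <;> omega
    · intro i hi
      have := h i
      rw [expOn_apply, if_neg hi] at this
      omega
  · intro ⟨h1, h2⟩ i
    rw [expOn_apply]
    by_cases hi : i ∈ U
    · rw [if_pos hi]; exact h1 i
    · rw [if_neg hi, h2 i hi]

/-- Master decomposition lemma. -/
lemma coeffWrt_step {S T : Finset (Fin n)} (hST : S ⊆ T) {A : MvPolynomial (Fin n) F}
    (hA : IndivDegLE d A) (m : Fin n →₀ ℕ) (hm : ∀ i ∉ S, m i = 0) :
    coeffWrt S ⇑m A =
      ∑ e ∈ Finset.Iic (expOn (T \ S) fun _ => d),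
        monomial e 1 * coeffWrt T ⇑(m + e) A := by
  classical
  apply MvPolynomial.ext
  intro μ
  rw [coeff_coeffWrt, MvPolynomial.coeff_sum, expOn_coe_eq_self S m hm]
  -- rewrite each summand
  have hterm : ∀ e ∈ Finset.Iic (expOn (T \ S) fun _ => d),
      MvPolynomial.coeff μ (monomial e 1 * coeffWrt T ⇑(m + e) A) =
      if e ≤ μ ∧ ∀ i ∈ T, (μ - e) i = 0 then A.coeff (μ - e + (m + e)) else 0 := by
    intro e he
    obtain ⟨hed, heU⟩ := mem_Iic_expOn.mp he
    rw [MvPolynomial.coeff_monomial_mul', coeff_coeffWrt]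
    have hsupp : ∀ i ∉ T, (m + e) i = 0 := by
      intro i hi
      rw [Finsupp.add_apply, hm i (fun h => hi (hST h)), heU i (by simp [hi])]
    rw [expOn_coe_eq_self T _ hsupp]
    split_ifs with h1 h2 h3 h3 <;> simp_all
  rw [Finset.sum_congr rfl hterm]
  split_ifs with hμ
  · -- μ is off S
    by_cases hbd : ∀ i ∈ T, μ i ≤ d
    · -- the unique surviving term is e₀ = μ.filter (· ∈ T)
      set e₀ : Fin n →₀ ℕ := μ.filter (fun i => i ∈ T) with he₀
      have he₀mem : e₀ ∈ Finset.Iic (expOn (T \ S) fun _ => d) := by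
        rw [mem_Iic_expOn]
        constructor
        · intro i
          rw [he₀, Finsupp.filter_apply]
          split_ifs with h
          · exact hbd i h
          · omega
        · intro i hi
          rw [he₀, Finsupp.filter_apply]
          split_ifs with h
          · rw [Finset.mem_sdiff] at hi
            push_neg at hi
            exact hμ i (hi h)
          · rfl
      have he₀le : e₀ ≤ μ := by
        rw [Finsupp.le_def]
        intro i
        rw [he₀, Finsupp.filter_apply]
        split_ifs <;> omega
      rw [Finset.sum_eq_single_of_mem e₀ he₀mem]
      · have hoff : ∀ i ∈ T, (μ - e₀) i = 0 := by
          intro i hi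
          rw [Finsupp.tsub_apply, he₀, Finsupp.filter_apply, if_pos hi]
          omega
        rw [if_pos ⟨he₀le, hoff⟩]
        congr 1
        ext i
        rw [Finsupp.add_apply, Finsupp.add_apply, Finsupp.add_apply, Finsupp.tsub_apply,
          he₀, Finsupp.filter_apply]
        split_ifs <;> omega
      · intro e he hne
        rw [if_neg]
        rintro ⟨hle, hoff⟩
        apply hne
        obtain ⟨hed, heU⟩ := mem_Iic_expOn.mp he
        ext i
        rw [he₀, Finsupp.filter_apply]
        by_cases hi : i ∈ T
        · rw [if_pos hi]
          have h1 := hoff i hi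
          have h2 := Finsupp.le_def.mp hle i
          rw [Finsupp.tsub_apply] at h1
          omega
        · rw [if_neg hi, heU i (by simp [hi])]
    · -- some variable in T exceeds d : both sides vanish
      push_neg at hbd
      obtain ⟨i, hiT, hid⟩ := hbd
      have hiS : i ∉ S := fun h => by rw [hμ i h] at hid; omega
      have hz : A.coeff (μ + m) = 0 := by
        by_contra hc
        have := hA _ (MvPolynomial.mem_support_iff.mpr hc) i
        rw [Finsupp.add_apply, hm i hiS] at this
        omega
      rw [hz]
      symm
      apply Finset.sum_eq_zero
      intro e he
      obtain ⟨hed, heU⟩ := mem_Iic_expOn.mp he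
      rw [if_neg]
      rintro ⟨hle, hoff⟩
      have h1 := hoff i hiT
      have h2 := Finsupp.le_def.mp hle i
      have h3 := hed i
      rw [Finsupp.tsub_apply] at h1
      omega
  · symm
    apply Finset.sum_eq_zero
    intro e he
    obtain ⟨hed, heU⟩ := mem_Iic_expOn.mp he
    rw [if_neg]
    rintro ⟨hle, hoff⟩
    push_neg at hμ
    obtain ⟨i, hiS, hine⟩ := hμ
    have := hoff i (hST hiS)
    rw [Finsupp.tsub_apply, heU i (by simp [hiS])] at this
    omega

end RoabpAux
namespace RoabpAux
open MvPolynomial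

variable {F : Type*} [Field F] {n d : ℕ}

lemma coeffWrt_monomial_mul {S : Finset (Fin n)} {f : MvPolynomial (Fin n) F}
    (hf : ∀ μ ∈ f.support, ∀ i ∈ S, μ i = 0) (ν : Fin n →₀ ℕ) (hν : ∀ i ∉ S, ν i = 0)
    (c : F) (m : Fin n →₀ ℕ) (hm : ∀ i ∉ S, m i = 0) :
    coeffWrt S ⇑m (monomial ν c * f) = (if ν = m then c else 0) • f := by
  classical
  apply MvPolynomial.ext
  intro μ
  rw [coeff_coeffWrt, expOn_coe_eq_self S m hm, MvPolynomial.coeff_smul]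
  by_cases h1 : ∀ i ∈ S, μ i = 0
  · rw [if_pos h1]
    by_cases h2 : ν = m
    · subst h2
      rw [if_pos rfl, MvPolynomial.coeff_monomial_mul', if_pos le_add_self,
        add_tsub_cancel_right, smul_eq_mul]
    · rw [if_neg h2, MvPolynomial.coeff_monomial_mul', zero_smul]
      split_ifs with h3
      · rw [mul_eq_zero]
        right
        by_contra hc
        have hsup := hf _ (MvPolynomial.mem_support_iff.mpr hc)
        apply h2
        ext i
        by_cases hiS : i ∈ S
        · have hthis := hsup i hiS
          have h4 := Finsupp.le_def.mp h3 i
          rw [Finsupp.tsub_apply, Finsupp.add_apply] at hthis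
          rw [Finsupp.add_apply] at h4
          have h5 := h1 i hiS
          omega
        · rw [hν i hiS, hm i hiS]
      · rfl
  · rw [if_neg h1]
    have hz : f.coeff μ = 0 := by
      by_contra hc
      push_neg at h1
      obtain ⟨i, hi, hne⟩ := h1
      exact hne (hf _ (MvPolynomial.mem_support_iff.mpr hc) i hi)
    rw [hz, smul_zero]

lemma coeffWrt_mul_right {S : Finset (Fin n)} {q f : MvPolynomial (Fin n) F}
    (hq : ∀ μ ∈ q.support, ∀ i ∉ S, μ i = 0) (hf : ∀ μ ∈ f.support, ∀ i ∈ S, μ i = 0)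
    (m : Fin n →₀ ℕ) (hm : ∀ i ∉ S, m i = 0) :
    coeffWrt S ⇑m (q * f) = q.coeff m • f := by
  classical
  conv_lhs => rw [q.as_sum, Finset.sum_mul]
  rw [coeffWrt_sum]
  have hterm : ∀ ν ∈ q.support,
      coeffWrt S ⇑m (monomial ν (q.coeff ν) * f) = (if ν = m then q.coeff ν else 0) • f :=
    fun ν hν => coeffWrt_monomial_mul hf ν (hq ν hν) _ m hm
  rw [Finset.sum_congr rfl hterm]
  by_cases hmem : m ∈ q.support
  · rw [Finset.sum_eq_single_of_mem m hmem]
    · rw [if_pos rfl]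
    · intro ν _ hne
      rw [if_neg hne, zero_smul]
  · rw [MvPolynomial.notMem_support_iff.mp hmem, zero_smul]
    apply Finset.sum_eq_zero
    intro ν hν
    rw [if_neg (fun h => hmem (by rw [← h]; exact hν)), zero_smul]

/-- From a spanning set whose span has rank `w`, extract an indexed basis together with a
globally-defined coordinate function. -/
lemma exists_indexed_basis {M : Type*} [AddCommGroup M] [Module F M] {w : ℕ} (s : Set M)
    (h : Module.rank F (Submodule.span F s) = w) :
    ∃ (f : Fin w → M) (c : M → Fin w → F),
      (∀ ℓ, f ℓ ∈ s) ∧ LinearIndependent F f ∧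
      ∀ p ∈ Submodule.span F s, ∑ ℓ, c p ℓ • f ℓ = p := by
  classical
  obtain ⟨b, hbs, hspan, hli⟩ := exists_linearIndependent F s
  have hcard : Cardinal.mk b = (w : Cardinal) := by
    rw [← rank_span_set hli, hspan, h]
  obtain ⟨e⟩ : Nonempty (b ≃ Fin w) := Cardinal.mk_eq_nat_iff.mp hcard
  set f : Fin w → M := fun ℓ => ((e.symm ℓ : b) : M) with hf
  have hlif : LinearIndependent F f := hli.comp e.symm e.symm.injective
  have hrange : Set.range f = b := by
    rw [hf]
    have : (fun ℓ => ((e.symm ℓ : b) : M)) = Subtype.val ∘ e.symm := rfl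
    rw [this, Function.Surjective.range_comp e.symm.surjective, Subtype.range_coe]
  have hVeq : Submodule.span F (Set.range f) = Submodule.span F s := by
    rw [hrange, hspan]
  set B := Module.Basis.span hlif with hB
  refine ⟨f, fun p ℓ => if hp : p ∈ Submodule.span F (Set.range f) then B.repr ⟨p, hp⟩ ℓ
      else 0, fun ℓ => hbs (by rw [← hrange]; exact Set.mem_range_self ℓ), hlif, ?_⟩
  intro p hp
  rw [← hVeq] at hp
  have hrepr := B.sum_repr ⟨p, hp⟩
  have hval := congrArg (Subtype.val) hrepr
  simp only [AddSubmonoidClass.coe_finset_sum, SetLike.val_smul, hB, Module.Basis.span_apply] at hval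
  have hc : ∀ ℓ, (if hp' : p ∈ Submodule.span F (Set.range f) then (B.repr ⟨p, hp'⟩) ℓ
      else 0) = (B.repr ⟨p, hp⟩) ℓ := fun ℓ => dif_pos hp
  simp only [dif_pos hp]
  exact hval

end RoabpAux
namespace RoabpAux
open MvPolynomial Matrix

variable {F : Type*} [Field F] {n d : ℕ}

lemma prefixProd_zero {w : ℕ} (D : Fin n → Matrix (Fin w) (Fin w) (MvPolynomial (Fin n) F)) :
    prefixProd 0 D = 1 := by
  unfold prefixProd
  simp

lemma prefixProd_succ {w k : ℕ} (hk : k < n)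
    (D : Fin n → Matrix (Fin w) (Fin w) (MvPolynomial (Fin n) F)) :
    prefixProd (k + 1) D = prefixProd k D * D ⟨k, hk⟩ := by
  unfold prefixProd
  rw [List.take_succ, List.map_append, List.prod_append]
  congr
  have hk' : k < (List.finRange n).length := by simpa using hk
  rw [List.getElem?_eq_getElem hk']
  simp

lemma layerProd_eq_prefixProd {w : ℕ}
    (D : Fin n → Matrix (Fin w) (Fin w) (MvPolynomial (Fin n) F)) :
    layerProd D = prefixProd n D := by
  unfold layerProd prefixProd
  rw [List.take_of_length_le (by simp)]

lemma support_monomial_sum {ι : Type*} (s : Finset ι) (g : ι → (Fin n →₀ ℕ)) (co : ι → F)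
    (P : (Fin n →₀ ℕ) → Prop) (hg : ∀ x ∈ s, P (g x)) :
    ∀ μ ∈ (∑ x ∈ s, monomial (g x) (co x)).support, P μ := by
  classical
  intro μ hμ
  obtain ⟨x, hx, hμx⟩ := Finset.mem_biUnion.mp (MvPolynomial.support_sum hμ)
  rw [MvPolynomial.support_monomial] at hμx
  split_ifs at hμx
  · simp at hμx
  · rw [Finset.mem_singleton] at hμx
    subst hμx
    exact hg x hx

lemma onVars_mul {S T : Finset (Fin n)} {p q : MvPolynomial (Fin n) F}
    (hp : ∀ μ ∈ p.support, ∀ i ∉ S, μ i = 0) (hq : ∀ μ ∈ q.support, ∀ i ∉ T, μ i = 0) :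
    ∀ μ ∈ (p * q).support, ∀ i, i ∉ S → i ∉ T → μ i = 0 := by
  classical
  intro μ hμ i hiS hiT
  obtain ⟨μ1, hμ1, μ2, hμ2, rfl⟩ := Finset.mem_add.mp (MvPolynomial.support_mul p q hμ)
  rw [Finsupp.add_apply, hp μ1 hμ1 i hiS, hq μ2 hμ2 i hiT]

end RoabpAux
namespace RoabpAux
open MvPolynomial
lemma monomial_one_mul_smul {F : Type*} [Field F] {n : ℕ} (e : Fin n →₀ ℕ) (x : F)
    (g : MvPolynomial (Fin n) F) :
    monomial e (1 : F) * (x • g) = monomial e x * g := by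
  rw [MvPolynomial.smul_eq_C_mul, ← mul_assoc]
  congr 1
  rw [mul_comm, MvPolynomial.C_mul_monomial, mul_one]
lemma cmul_eq {l m k R : Type*} [Fintype m] [Mul R] [AddCommMonoid R]
    (M : Matrix l m R) (N : Matrix m k R) :
    @HMul.hMul (Matrix l m R) (Matrix m k R) (Matrix l k R)
      CStarMatrix.instHMulOfFintypeOfMulOfAddCommMonoid M N = M * N := rfl
end RoabpAux
open RoabpAux in
/-- Corollary 2.6 of the paper, full rank coefficient space: if the prefix
coefficient spaces of `A` have dimension exactly `w` for `1 ≤ k ≤ n-1` (and dimension `1` for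
`k = n`), then the matrices `D₁, …, Dₙ` of an ROABP for `A` can be chosen such that for every
`k` and every `ℓ`, some coefficient of the partial product `P_k = D₁ ⋯ D_k` equals the `ℓ`-th
standard unit vector `e_ℓ`; in particular the coefficients of `P_k` span all of `F^{1×w}`. -/
theorem exists_roabp_with_full_rank_prefix_coefficient_space
    {F : Type*} [Field F] {n w d : ℕ} (hw : 0 < w)
    (A : MvPolynomial (Fin n) F)
    (hdeg : IndivDegLE d A)
    (hdim : ∀ k, 1 ≤ k → k ≤ n - 1 →
      Module.rank F ↥(Submodule.span F
        {P : MvPolynomial (Fin n) F |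
          ∃ a : Fin n → ℕ, (∀ i, a i ≤ d) ∧ P = coeffWrt (prefixFinset n k) a A}) = w)
    (hdimn : Module.rank F ↥(Submodule.span F
        {P : MvPolynomial (Fin n) F |
          ∃ a : Fin n → ℕ, (∀ i, a i ≤ d) ∧ P = coeffWrt (prefixFinset n n) a A}) = 1) :
    ∃ (u : Matrix (Fin 1) (Fin w) F)
      (D : Fin n → Matrix (Fin w) (Fin w) (MvPolynomial (Fin n) F))
      (v : Matrix (Fin w) (Fin 1) F),
      (∀ i r c, UnivariateIn i (D i r c)) ∧
      A = (u.map (MvPolynomial.C (σ := Fin n)) * layerProd D * v.map (MvPolynomial.C (σ := Fin n)) :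
        Matrix (Fin 1) (Fin 1) (MvPolynomial (Fin n) F)) 0 0 ∧
      ∀ k, 1 ≤ k → k ≤ n - 1 →
        (∀ ℓ : Fin w, ∃ a : Fin n → ℕ, (∀ i, a i ≤ d) ∧
          (fun c : Fin w =>
            ((u.map (MvPolynomial.C) * prefixProd k D :
              Matrix (Fin 1) (Fin w) (MvPolynomial (Fin n) F)) 0 c).coeff
                (expOn (prefixFinset n k) a)) =
            fun c : Fin w => if c = ℓ then (1 : F) else 0) ∧
        Submodule.span F
          {vec : Fin w → F | ∃ a : Fin n → ℕ, (∀ i, a i ≤ d) ∧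
            vec = fun c : Fin w =>
              ((u.map (MvPolynomial.C) * prefixProd k D :
                Matrix (Fin 1) (Fin w) (MvPolynomial (Fin n) F)) 0 c).coeff
                  (expOn (prefixFinset n k) a)} = ⊤ := by
    classical
  by_cases h0 : n = 0
  · subst h0
    refine ⟨Matrix.of fun _ r => if r = (⟨0, hw⟩ : Fin w) then constantCoeff A else 0,
        fun i => i.elim0,
        Matrix.of fun r _ => if r = (⟨0, hw⟩ : Fin w) then 1 else 0, ?_, ?_, ?_⟩
    · intro i
      exact i.elim0
    · have h1 : layerProd (F := F) (w := w) (fun i => i.elim0) = 1 := by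
        simp [layerProd]
      rw [h1, Matrix.mul_one, Matrix.mul_apply]
      simp only [Matrix.map_apply, Matrix.of_apply, apply_ite MvPolynomial.C, _root_.map_one,
        map_zero, ite_mul, mul_ite, one_mul, mul_one, mul_zero, zero_mul]
      rw [Finset.sum_ite_eq' Finset.univ (⟨0, hw⟩ : Fin w), if_pos (Finset.mem_univ _)]
      obtain ⟨cA, rfl⟩ := MvPolynomial.C_surjective (Fin 0) A
      simp
    · intro k hk1 hk2
      omega
  by_cases h1 : n = 1
  · subst h1
    refine ⟨Matrix.of fun _ r => if r = (⟨0, hw⟩ : Fin w) then 1 else 0,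
        fun _ => Matrix.of fun r cc =>
          if r = (⟨0, hw⟩ : Fin w) ∧ cc = (⟨0, hw⟩ : Fin w) then A else 0,
        Matrix.of fun r _ => if r = (⟨0, hw⟩ : Fin w) then 1 else 0, ?_, ?_, ?_⟩
    · intro i r cc m hm j hj
      exact absurd (Subsingleton.elim j i) hj
    · have h1 : layerProd (F := F) (fun _ : Fin 1 => Matrix.of fun r cc =>
          if r = (⟨0, hw⟩ : Fin w) ∧ cc = (⟨0, hw⟩ : Fin w) then A else 0) =
          Matrix.of fun r cc =>
            if r = (⟨0, hw⟩ : Fin w) ∧ cc = (⟨0, hw⟩ : Fin w) then A else 0 := by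
        simp [layerProd]
      rw [h1]
      simp only [Matrix.mul_apply, Matrix.map_apply, Matrix.of_apply, apply_ite MvPolynomial.C,
        _root_.map_one, map_zero, ite_mul, mul_ite, one_mul, mul_one, mul_zero, zero_mul,
        ite_and]
      simp [Finset.sum_ite_eq', Finset.sum_ite_eq]
    · intro k hk1 hk2
      omega
  have hn2 : 2 ≤ n := by omega
  have hmemS : ∀ (k : ℕ) (i : Fin n), i ∈ prefixFinset n k ↔ (i : ℕ) < k := by
    intro k i
    simp [prefixFinset]
  have key : ∀ k : ℕ, ∃ (f : Fin w → MvPolynomial (Fin n) F) (a : Fin w → Fin n → ℕ)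
      (c : MvPolynomial (Fin n) F → Fin w → F), 1 ≤ k → k ≤ n - 1 →
      ((∀ ℓ i, a ℓ i ≤ d) ∧ (∀ ℓ, f ℓ = coeffWrt (prefixFinset n k) (a ℓ) A) ∧
       LinearIndependent F f ∧
       (∀ p ∈ Submodule.span F {P : MvPolynomial (Fin n) F |
          ∃ a : Fin n → ℕ, (∀ i, a i ≤ d) ∧ P = coeffWrt (prefixFinset n k) a A},
          ∑ ℓ, c p ℓ • f ℓ = p)) := by
    intro k
    by_cases hk : 1 ≤ k ∧ k ≤ n - 1
    · obtain ⟨f, c, hmem, hli, hrep⟩ := exists_indexed_basis _ (hdim k hk.1 hk.2)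
      simp only [Set.mem_setOf_eq] at hmem
      choose a ha using hmem
      exact ⟨f, a, c, fun _ _ => ⟨fun ℓ i => (ha ℓ).1 i, fun ℓ => (ha ℓ).2, hli, hrep⟩⟩
    · exact ⟨fun _ => 0, fun _ _ => 0, fun _ _ => 0,
        fun hk1 hk2 => absurd ⟨hk1, hk2⟩ hk⟩
  choose f a c hkey using key
  set i0 : Fin w := ⟨0, hw⟩ with hi0
  set u : Matrix (Fin 1) (Fin w) F := Matrix.of fun _ r => if r = i0 then 1 else 0 with hu
  set v : Matrix (Fin w) (Fin 1) F := Matrix.of fun r _ => if r = i0 then 1 else 0 with hv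
  set D : Fin n → Matrix (Fin w) (Fin w) (MvPolynomial (Fin n) F) := fun i =>
    if (i : ℕ) = 0 then
      Matrix.of fun r ℓ => if r = i0 then
        (∑ m ∈ Finset.Iic (expOn (prefixFinset n 1) fun _ => d),
          MvPolynomial.monomial m (c 1 (coeffWrt (prefixFinset n 1) ⇑m A) ℓ)) else 0
    else if (i : ℕ) = n - 1 then
      Matrix.of fun r ℓ => if ℓ = i0 then f (n - 1) r else 0
    else
      Matrix.of fun r ℓ =>
        ∑ e ∈ Finset.Iic (expOn (prefixFinset n ((i : ℕ) + 1) \ prefixFinset n (i : ℕ))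
            fun _ => d),
          MvPolynomial.monomial e (c ((i : ℕ) + 1)
            (coeffWrt (prefixFinset n ((i : ℕ) + 1))
              ⇑(expOn (prefixFinset n (i : ℕ)) (a (i : ℕ) r) + e) A) ℓ) with hD
  have hD0 : ∀ (hh : 0 < n) (r ℓ : Fin w), D ⟨0, hh⟩ r ℓ =
      if r = i0 then (∑ m ∈ Finset.Iic (expOn (prefixFinset n 1) fun _ => d),
        MvPolynomial.monomial m (c 1 (coeffWrt (prefixFinset n 1) ⇑m A) ℓ)) else 0 := by
    intro hh r ℓ
    have hm : D ⟨0, hh⟩ = Matrix.of fun r ℓ => if r = i0 then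
        (∑ m ∈ Finset.Iic (expOn (prefixFinset n 1) fun _ => d),
          MvPolynomial.monomial m (c 1 (coeffWrt (prefixFinset n 1) ⇑m A) ℓ)) else 0 := by
      simp only [hD]
      split_ifs <;> first | rfl | omega | exact absurd trivial (by assumption)
    rw [hm]
    rfl
  have hDlast : ∀ (hh : n - 1 < n) (r ℓ : Fin w), D ⟨n - 1, hh⟩ r ℓ =
      if ℓ = i0 then f (n - 1) r else 0 := by
    intro hh r ℓ
    have hm : D ⟨n - 1, hh⟩ = Matrix.of fun r ℓ => if ℓ = i0 then f (n - 1) r else 0 := by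
      simp only [hD]
      split_ifs <;> first | rfl | omega | exact absurd trivial (by assumption)
    rw [hm]
    rfl
  have hDmid : ∀ (k : ℕ) (hh : k < n), k ≠ 0 → k ≠ n - 1 → ∀ (r ℓ : Fin w),
      D ⟨k, hh⟩ r ℓ =
      ∑ e ∈ Finset.Iic (expOn (prefixFinset n (k + 1) \ prefixFinset n k) fun _ => d),
        MvPolynomial.monomial e (c (k + 1) (coeffWrt (prefixFinset n (k + 1))
          ⇑(expOn (prefixFinset n k) (a k r) + e) A) ℓ) := by
    intro k hh hk0 hk1 r ℓ
    have hm : D ⟨k, hh⟩ = Matrix.of fun r ℓ =>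
        ∑ e ∈ Finset.Iic (expOn (prefixFinset n (k + 1) \ prefixFinset n k) fun _ => d),
          MvPolynomial.monomial e (c (k + 1) (coeffWrt (prefixFinset n (k + 1))
            ⇑(expOn (prefixFinset n k) (a k r) + e) A) ℓ) := by
      simp only [hD]
      split_ifs <;> first | rfl | omega | exact absurd trivial (by assumption)
    rw [hm]
    rfl
  have hfoff : ∀ k, 1 ≤ k → k ≤ n - 1 → ∀ ℓ, ∀ μ ∈ (f k ℓ).support,
      ∀ i ∈ prefixFinset n k, μ i = 0 := by
    intro k hk1 hk2 ℓ
    rw [(hkey k hk1 hk2).2.1 ℓ]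
    exact support_coeffWrt _ _ _
  have hGenspan : ∀ (k : ℕ) (m : Fin n →₀ ℕ), (∀ i, m i ≤ d) →
      coeffWrt (prefixFinset n k) ⇑m A ∈ Submodule.span F {P : MvPolynomial (Fin n) F |
        ∃ a : Fin n → ℕ, (∀ i, a i ≤ d) ∧ P = coeffWrt (prefixFinset n k) a A} :=
    fun k m hm => Submodule.subset_span ⟨⇑m, hm, rfl⟩
  have hexpand : ∀ k, 1 ≤ k → k ≤ n - 1 → ∀ m : Fin n →₀ ℕ, (∀ i, m i ≤ d) →
      coeffWrt (prefixFinset n k) ⇑m A =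
        ∑ ℓ, c k (coeffWrt (prefixFinset n k) ⇑m A) ℓ • f k ℓ :=
    fun k hk1 hk2 m hm => ((hkey k hk1 hk2).2.2.2 _ (hGenspan k m hm)).symm
  have main : ∀ k, 1 ≤ k → k ≤ n - 1 →
      (∀ ℓ, ∀ μ ∈ ((u.map MvPolynomial.C * prefixProd k D :
          Matrix (Fin 1) (Fin w) (MvPolynomial (Fin n) F)) 0 ℓ).support,
        ∀ i ∉ prefixFinset n k, μ i = 0) ∧
      A = ∑ ℓ, (u.map MvPolynomial.C * prefixProd k D :
          Matrix (Fin 1) (Fin w) (MvPolynomial (Fin n) F)) 0 ℓ * f k ℓ := by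
    intro k hk1
    induction k, hk1 using Nat.le_induction with
    | base =>
      intro hk2
      have h0n : (0:ℕ) < n := by omega
      have hpp := prefixProd_succ (w := w) h0n D
      rw [zero_add, prefixProd_zero, one_mul] at hpp
      have hR1 : ∀ ℓ, (u.map MvPolynomial.C * prefixProd 1 D :
          Matrix (Fin 1) (Fin w) (MvPolynomial (Fin n) F)) 0 ℓ =
          ∑ m ∈ Finset.Iic (expOn (prefixFinset n 1) fun _ => d),
            MvPolynomial.monomial m (c 1 (coeffWrt (prefixFinset n 1) ⇑m A) ℓ) := by
        intro ℓ
        rw [hpp, cmul_eq, Matrix.mul_apply]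
        have hsummand : ∀ j, (u.map MvPolynomial.C) 0 j * D ⟨0, h0n⟩ j ℓ =
            if j = i0 then (∑ m ∈ Finset.Iic (expOn (prefixFinset n 1) fun _ => d),
              MvPolynomial.monomial m (c 1 (coeffWrt (prefixFinset n 1) ⇑m A) ℓ)) else 0 := by
          intro j
          rw [Matrix.map_apply, hD0 h0n]
          by_cases hj : j = i0
          · rw [if_pos hj]
            have hval : u 0 j = 1 := by rw [hu]; exact if_pos hj
            rw [hval, _root_.map_one, one_mul]
          · rw [if_neg hj]
            rw [mul_zero]
        rw [Finset.sum_congr rfl fun j _ => hsummand j,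
          Finset.sum_ite_eq' Finset.univ i0, if_pos (Finset.mem_univ _)]
      constructor
      · intro ℓ
        rw [hR1 ℓ]
        exact support_monomial_sum _ _ _ _ (fun m hm => (mem_Iic_expOn.mp hm).2)
      · have hbase := coeffWrt_step (Finset.empty_subset (prefixFinset n 1)) hdeg
          (0 : Fin n →₀ ℕ) (fun i _ => rfl)
        rw [Finset.sdiff_empty, coeffWrt_empty] at hbase
        calc A = ∑ m ∈ Finset.Iic (expOn (prefixFinset n 1) fun _ => d),
              MvPolynomial.monomial m 1 *
                coeffWrt (prefixFinset n 1) ⇑((0 : Fin n →₀ ℕ) + m) A := hbase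
        _ = ∑ m ∈ Finset.Iic (expOn (prefixFinset n 1) fun _ => d),
              ∑ ℓ, MvPolynomial.monomial m (c 1 (coeffWrt (prefixFinset n 1) ⇑m A) ℓ) *
                f 1 ℓ := by
            apply Finset.sum_congr rfl
            intro m hm
            conv_lhs => rw [zero_add, hexpand 1 le_rfl (by omega) m (mem_Iic_expOn.mp hm).1]
            rw [Finset.mul_sum]
            exact Finset.sum_congr rfl fun ℓ _ => monomial_one_mul_smul _ _ _
        _ = ∑ ℓ, (∑ m ∈ Finset.Iic (expOn (prefixFinset n 1) fun _ => d),
              MvPolynomial.monomial m (c 1 (coeffWrt (prefixFinset n 1) ⇑m A) ℓ)) * f 1 ℓ := by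
            rw [Finset.sum_comm]
            exact Finset.sum_congr rfl fun ℓ _ => (Finset.sum_mul _ _ _).symm
        _ = ∑ ℓ, (u.map MvPolynomial.C * prefixProd 1 D :
              Matrix (Fin 1) (Fin w) (MvPolynomial (Fin n) F)) 0 ℓ * f 1 ℓ :=
            Finset.sum_congr rfl fun ℓ _ => by rw [hR1 ℓ]
    | succ k hk ih =>
      intro hk2
      obtain ⟨ihsupp, ihA⟩ := ih (by omega)
      have hkn : k < n := by omega
      have hka := hkey k hk (by omega)
      have hsub : prefixFinset n k ⊆ prefixFinset n (k + 1) := by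
        intro i hi
        rw [hmemS] at hi ⊢
        omega
      have hmid := hDmid k hkn (by omega) (by omega)
      have hfstep : ∀ m : Fin w, f k m = ∑ ℓ, D ⟨k, hkn⟩ m ℓ * f (k + 1) ℓ := by
        intro m
        have hacongr : coeffWrt (prefixFinset n k) (a k m) A =
            coeffWrt (prefixFinset n k) ⇑(expOn (prefixFinset n k) (a k m)) A :=
          coeffWrt_congr _ A (fun i hi => by rw [expOn_apply, if_pos hi])
        have hoff : ∀ i ∉ prefixFinset n k, expOn (prefixFinset n k) (a k m) i = 0 :=
          fun i hi => by rw [expOn_apply, if_neg hi]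
        have hstep := coeffWrt_step hsub hdeg (expOn (prefixFinset n k) (a k m)) hoff
        calc f k m = ∑ e ∈ Finset.Iic
                (expOn (prefixFinset n (k + 1) \ prefixFinset n k) fun _ => d),
              MvPolynomial.monomial e 1 * coeffWrt (prefixFinset n (k + 1))
                ⇑(expOn (prefixFinset n k) (a k m) + e) A := by
                rw [hka.2.1 m, hacongr, hstep]
        _ = ∑ e ∈ Finset.Iic (expOn (prefixFinset n (k + 1) \ prefixFinset n k) fun _ => d),
              ∑ ℓ, MvPolynomial.monomial e (c (k + 1) (coeffWrt (prefixFinset n (k + 1))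
                ⇑(expOn (prefixFinset n k) (a k m) + e) A) ℓ) * f (k + 1) ℓ := by
            apply Finset.sum_congr rfl
            intro e he
            have hbound : ∀ i, (expOn (prefixFinset n k) (a k m) + e) i ≤ d := by
              intro i
              obtain ⟨he1, he2⟩ := mem_Iic_expOn.mp he
              rw [Finsupp.add_apply, expOn_apply]
              by_cases hi : i ∈ prefixFinset n k
              · rw [if_pos hi, he2 i (by simp [Finset.mem_sdiff, hi])]
                have := hka.1 m i
                omega
              · rw [if_neg hi, zero_add]
                exact he1 i
            conv_lhs => rw [hexpand (k + 1) (by omega) hk2 _ hbound]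
            rw [Finset.mul_sum]
            exact Finset.sum_congr rfl fun ℓ _ => monomial_one_mul_smul _ _ _
        _ = ∑ ℓ, D ⟨k, hkn⟩ m ℓ * f (k + 1) ℓ := by
            rw [Finset.sum_comm]
            apply Finset.sum_congr rfl
            intro ℓ _
            rw [hmid m ℓ, Finset.sum_mul]
      have hRsucc : ∀ ℓ, (u.map MvPolynomial.C * prefixProd (k + 1) D :
          Matrix (Fin 1) (Fin w) (MvPolynomial (Fin n) F)) 0 ℓ =
          ∑ m, (u.map MvPolynomial.C * prefixProd k D :
            Matrix (Fin 1) (Fin w) (MvPolynomial (Fin n) F)) 0 m * D ⟨k, hkn⟩ m ℓ := by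
        intro ℓ
        rw [prefixProd_succ hkn, cmul_eq, cmul_eq, ← Matrix.mul_assoc, Matrix.mul_apply]
      constructor
      · intro ℓ μ hμ i hi
        rw [hRsucc ℓ] at hμ
        obtain ⟨m, _, hμm⟩ := Finset.mem_biUnion.mp (MvPolynomial.support_sum hμ)
        have hDsupp : ∀ ν ∈ (D ⟨k, hkn⟩ m ℓ).support,
            ∀ j ∉ prefixFinset n (k + 1) \ prefixFinset n k, ν j = 0 := by
          rw [hmid m ℓ]
          exact support_monomial_sum _ _ _ _ (fun e he => (mem_Iic_expOn.mp he).2)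
        exact onVars_mul (ihsupp m) hDsupp μ hμm i (fun h => hi (hsub h))
          (fun hmem => hi (Finset.mem_sdiff.mp hmem).1)
      · calc A = ∑ m, (u.map MvPolynomial.C * prefixProd k D :
              Matrix (Fin 1) (Fin w) (MvPolynomial (Fin n) F)) 0 m * f k m := ihA
        _ = ∑ m, (u.map MvPolynomial.C * prefixProd k D :
              Matrix (Fin 1) (Fin w) (MvPolynomial (Fin n) F)) 0 m *
              ∑ ℓ, D ⟨k, hkn⟩ m ℓ * f (k + 1) ℓ :=
            Finset.sum_congr rfl fun m _ => by rw [hfstep m]; rfl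
        _ = ∑ ℓ, (∑ m, (u.map MvPolynomial.C * prefixProd k D :
              Matrix (Fin 1) (Fin w) (MvPolynomial (Fin n) F)) 0 m * D ⟨k, hkn⟩ m ℓ) *
              f (k + 1) ℓ := by
            simp_rw [Finset.mul_sum]
            rw [Finset.sum_comm]
            apply Finset.sum_congr rfl
            intro ℓ _
            rw [Finset.sum_mul]
            exact Finset.sum_congr rfl fun m _ => (mul_assoc _ _ _).symm
        _ = ∑ ℓ, (u.map MvPolynomial.C * prefixProd (k + 1) D :
              Matrix (Fin 1) (Fin w) (MvPolynomial (Fin n) F)) 0 ℓ * f (k + 1) ℓ :=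
            Finset.sum_congr rfl fun ℓ _ => by rw [hRsucc ℓ]
  have extract : ∀ k, 1 ≤ k → k ≤ n - 1 → ∀ m : Fin n →₀ ℕ,
      (∀ i ∉ prefixFinset n k, m i = 0) →
      ∑ ℓ, ((u.map MvPolynomial.C * prefixProd k D :
          Matrix (Fin 1) (Fin w) (MvPolynomial (Fin n) F)) 0 ℓ).coeff m • f k ℓ =
        coeffWrt (prefixFinset n k) ⇑m A := by
    intro k hk1 hk2 m hm
    obtain ⟨hsupp, hA⟩ := main k hk1 hk2
    have step : coeffWrt (prefixFinset n k) ⇑m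
        (∑ ℓ, (u.map MvPolynomial.C * prefixProd k D :
          Matrix (Fin 1) (Fin w) (MvPolynomial (Fin n) F)) 0 ℓ * f k ℓ) =
        ∑ ℓ, ((u.map MvPolynomial.C * prefixProd k D :
          Matrix (Fin 1) (Fin w) (MvPolynomial (Fin n) F)) 0 ℓ).coeff m • f k ℓ := by
      rw [coeffWrt_sum]
      exact Finset.sum_congr rfl fun ℓ _ =>
        coeffWrt_mul_right (hsupp ℓ) (hfoff k hk1 hk2 ℓ) m hm
    rw [← step, ← hA]
  have unit : ∀ k, 1 ≤ k → k ≤ n - 1 → ∀ ℓ0 ℓ : Fin w,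
      ((u.map MvPolynomial.C * prefixProd k D :
        Matrix (Fin 1) (Fin w) (MvPolynomial (Fin n) F)) 0 ℓ).coeff
          (expOn (prefixFinset n k) (a k ℓ0)) = if ℓ = ℓ0 then 1 else 0 := by
    intro k hk1 hk2 ℓ0 ℓ
    have hka := hkey k hk1 hk2
    have hmoff : ∀ i ∉ prefixFinset n k, expOn (prefixFinset n k) (a k ℓ0) i = 0 :=
      fun i hi => by rw [expOn_apply, if_neg hi]
    have h4 := extract k hk1 hk2 _ hmoff
    have h3 : coeffWrt (prefixFinset n k) ⇑(expOn (prefixFinset n k) (a k ℓ0)) A = f k ℓ0 := by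
      rw [hka.2.1 ℓ0]
      exact (coeffWrt_congr _ A (fun i hi => by rw [expOn_apply, if_pos hi])).symm
    rw [h3] at h4
    have h5 : ∑ ℓ', (if ℓ' = ℓ0 then (1:F) else 0) • f k ℓ' = f k ℓ0 := by
      simp [ite_smul]
    have h6 := Fintype.linearIndependent_iff.mp hka.2.2.1
      (fun ℓ' => ((u.map MvPolynomial.C * prefixProd k D :
        Matrix (Fin 1) (Fin w) (MvPolynomial (Fin n) F)) 0 ℓ').coeff
          (expOn (prefixFinset n k) (a k ℓ0)) - if ℓ' = ℓ0 then 1 else 0)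
      (by
        simp only [sub_smul]
        rw [Finset.sum_sub_distrib, h4, h5, sub_self]) ℓ
    exact sub_eq_zero.mp h6
  refine ⟨u, D, v, ?_, ?_, ?_⟩
  · intro i r cc m hm j hj
    by_cases hiv : (i : ℕ) = 0
    · have hie : i = ⟨0, by omega⟩ := Fin.ext hiv
      rw [hie, hD0 (by omega) r cc] at hm
      split_ifs at hm
      · have hj1 : j ∉ prefixFinset n 1 := by
          rw [hmemS]
          intro hlt
          exact hj (Fin.ext (by omega : (j : ℕ) = (i : ℕ)))
        exact support_monomial_sum _ _ _
          (fun μ => ∀ i ∉ prefixFinset n 1, μ i = 0)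
          (fun mm hmm => (mem_Iic_expOn.mp hmm).2) m hm j hj1
      · simp at hm
    · by_cases hiv2 : (i : ℕ) = n - 1
      · have hie : i = ⟨n - 1, by omega⟩ := Fin.ext hiv2
        rw [hie, hDlast (by omega) r cc] at hm
        split_ifs at hm
        · have hj1 : j ∈ prefixFinset n (n - 1) := by
            rw [hmemS]
            have hjlt : (j : ℕ) < n := j.isLt
            have : (j : ℕ) ≠ n - 1 := fun hh =>
              hj (Fin.ext (by omega : (j : ℕ) = (i : ℕ)))
            omega
          exact hfoff (n - 1) (by omega) le_rfl r m hm j hj1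
        · simp at hm
      · have hie : i = ⟨(i : ℕ), i.isLt⟩ := Fin.ext rfl
        rw [hie, hDmid (i : ℕ) i.isLt hiv hiv2 r cc] at hm
        have hj1 : j ∉ prefixFinset n ((i : ℕ) + 1) \ prefixFinset n (i : ℕ) := by
          rw [Finset.mem_sdiff, hmemS, hmemS]
          intro ⟨hh1, hh2⟩
          exact hj (Fin.ext (by omega : (j : ℕ) = (i : ℕ)))
        exact support_monomial_sum _ _ _
          (fun μ => ∀ jj ∉ prefixFinset n ((i : ℕ) + 1) \ prefixFinset n (i : ℕ), μ jj = 0)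
          (fun e he => (mem_Iic_expOn.mp he).2) m hm j hj1
  · rw [layerProd_eq_prefixProd]
    have hn1 : n - 1 < n := by omega
    have hpp := prefixProd_succ hn1 D
    rw [Nat.sub_add_cancel (by omega : 1 ≤ n)] at hpp
    rw [hpp, ← Matrix.mul_assoc, Matrix.mul_apply]
    have hXsum : ∀ cc : Fin w,
        (u.map (MvPolynomial.C (σ := Fin n)) * prefixProd (n - 1) D * D ⟨n - 1, hn1⟩ :
          Matrix (Fin 1) (Fin w) (MvPolynomial (Fin n) F)) 0 cc * (v.map MvPolynomial.C) cc 0 =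
        if cc = i0 then (u.map (MvPolynomial.C (σ := Fin n)) * prefixProd (n - 1) D * D ⟨n - 1, hn1⟩ :
          Matrix (Fin 1) (Fin w) (MvPolynomial (Fin n) F)) 0 cc else 0 := by
      intro cc
      rw [Matrix.map_apply]
      have hvv : v cc 0 = if cc = i0 then 1 else 0 := by rw [hv]; rfl
      rw [hvv, apply_ite MvPolynomial.C, _root_.map_one, map_zero]
      by_cases hc : cc = i0
      · rw [if_pos hc, mul_one, if_pos hc]
      · rw [if_neg hc, mul_zero, if_neg hc]
    rw [Finset.sum_congr rfl fun cc _ => hXsum cc,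
      Finset.sum_ite_eq' Finset.univ i0, if_pos (Finset.mem_univ _), Matrix.mul_apply]
    have hterm : ∀ m : Fin w,
        (u.map (MvPolynomial.C (σ := Fin n)) * prefixProd (n - 1) D :
          Matrix (Fin 1) (Fin w) (MvPolynomial (Fin n) F)) 0 m * D ⟨n - 1, hn1⟩ m i0 =
        (u.map (MvPolynomial.C (σ := Fin n)) * prefixProd (n - 1) D :
          Matrix (Fin 1) (Fin w) (MvPolynomial (Fin n) F)) 0 m * f (n - 1) m := by
      intro m
      rw [hDlast hn1 m i0, if_pos rfl]
    rw [Finset.sum_congr rfl fun m _ => hterm m]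
    exact (main (n - 1) (by omega) le_rfl).2
  · intro k hk1 hk2
    have hka := hkey k hk1 hk2
    constructor
    · intro ℓ
      refine ⟨a k ℓ, hka.1 ℓ, ?_⟩
      funext cc
      exact unit k hk1 hk2 ℓ cc
    · rw [eq_top_iff, ← (Pi.basisFun F (Fin w)).span_eq]
      apply Submodule.span_le.mpr
      rintro x ⟨ℓ, rfl⟩
      apply Submodule.subset_span
      refine ⟨a k ℓ, hka.1 ℓ, ?_⟩
      rw [Pi.basisFun_apply]
      funext cc
      rw [Pi.single_apply]
      exact (unit k hk1 hk2 ℓ cc).symm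
end

section
/- Let F be a field and let A be an m×m' matrix polynomial (an m×m' matrix with entries in F[x_1,…,x_n]) of individual degree at most d; set k = m·m'. Let w: {1,…,n} → ℕ be a weight function, extended to exponent vectors by w(a) = Σ_{i=1}^n w(i)·a_i. Suppose w is a basis isolating weight assignment for A: there exists S ⊆ {0,1,…,d}^n with |S| ≤ k such that w is injective on S, and for every a ∈ {0,…,d}^n \ S, coeff_A(x^a) lies in the F-span of {coeff_A(x^b) : b ∈ S, w(b) < w(a)}. Then the shifted polynomial A(x_1 + t^{w(1)},…, x_n + t^{w(n)}), whose coefficients lie in F(t)^{m×m'}, is ⌈log₂(k+1)⌉-concentrated over F(t). -/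
open MvPolynomial Matrix

section Aux


open Finset

variable {F : Type*} [Field F]
variable {n : ℕ}

def binomN {n : ℕ} (e a : Fin n →₀ ℕ) : ℕ := ∏ i : Fin n, (e i).choose (a i)

lemma binomN_add_single {n : ℕ} (b a' : Fin n →₀ ℕ) (i₀ : Fin n) (h : a' i₀ = 0) (α : ℕ) :
    binomN b (a' + Finsupp.single i₀ α) = binomN b a' * (b i₀).choose α := by
  unfold binomN
  rw [← Finset.prod_erase_mul Finset.univ _ (Finset.mem_univ i₀),
    ← Finset.prod_erase_mul Finset.univ (fun i => (b i).choose (a' i)) (Finset.mem_univ i₀)]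
  have h1 : ∀ i ∈ Finset.univ.erase i₀,
      (b i).choose ((a' + Finsupp.single i₀ α) i) = (b i).choose (a' i) := by
    intro i hi
    have hne : i ≠ i₀ := (Finset.mem_erase.1 hi).1
    rw [Finsupp.add_apply, Finsupp.single_apply, if_neg (fun hh => hne hh.symm), add_zero]
  rw [Finset.prod_congr rfl h1]
  have h2 : (a' + Finsupp.single i₀ α) i₀ = α := by
    rw [Finsupp.add_apply, h, Finsupp.single_apply, if_pos rfl, zero_add]
  rw [h2, h, Nat.choose_zero_right, mul_one]

lemma binomN_erase {n : ℕ} (b a : Fin n →₀ ℕ) (i₀ : Fin n) (h : a i₀ = 0) :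
    binomN (b.erase i₀) a = binomN b a := by
  unfold binomN
  apply Finset.prod_congr rfl
  intro i _
  by_cases hi : i = i₀
  · subst hi; rw [Finsupp.erase_same, h, Nat.choose_zero_right, Nat.choose_zero_right]
  · rw [Finsupp.erase_ne hi]

lemma binomN_zero_of_lt {n : ℕ} (b a : Fin n →₀ ℕ) (i : Fin n) (h : b i < a i) :
    binomN b a = 0 :=
  Finset.prod_eq_zero (Finset.mem_univ i) (Nat.choose_eq_zero_of_lt h)

lemma support_card_add_single {n : ℕ} (a' : Fin n →₀ ℕ) (i₀ : Fin n) (α : ℕ) :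
    (a' + Finsupp.single i₀ α).support.card ≤ a'.support.card + 1 := by
  calc (a' + Finsupp.single i₀ α).support.card
      ≤ (a'.support ∪ (Finsupp.single i₀ α).support).card :=
        Finset.card_le_card Finsupp.support_add
    _ ≤ a'.support.card + (Finsupp.single i₀ α).support.card := Finset.card_union_le _ _
    _ ≤ a'.support.card + 1 := by
        have := Finset.card_le_card (Finsupp.support_single_subset (a := i₀) (b := α))
        simp only [Finset.card_singleton] at this
        omega
variable {F : Type*} [Field F]

/-- product of binomial coefficients -/
lemma lemU (B : Finset ℕ) (g : ℕ → F)
    (h : ∀ α : ℕ, ∑ β ∈ B, (Nat.choose β α : F) * g β = 0) :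
    ∀ β ∈ B, g β = 0 := by
  classical
  generalize hc : B.card = N at *
  induction N generalizing B with
  | zero =>
    have : B = ∅ := Finset.card_eq_zero.1 hc
    simp [this]
  | succ k ih =>
    have hne : B.Nonempty := by
      rw [← Finset.card_pos, hc]; omega
    set βm := B.max' hne with hβm
    have hmem : βm ∈ B := B.max'_mem hne
    have hgm : g βm = 0 := by
      have := h βm
      rw [← Finset.add_sum_erase _ _ hmem] at this
      rw [Finset.sum_eq_zero, add_zero, Nat.choose_self, Nat.cast_one, one_mul] at this
      · exact this
      · intro β hβ
        have hβB : β ∈ B := Finset.mem_of_mem_erase hβ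
        have hlt : β < βm := lt_of_le_of_ne (B.le_max' β hβB) (Finset.ne_of_mem_erase hβ)
        rw [Nat.choose_eq_zero_of_lt hlt, Nat.cast_zero, zero_mul]
    intro β hβ
    rcases eq_or_ne β βm with rfl | hne2
    · exact hgm
    have : β ∈ B.erase βm := Finset.mem_erase.2 ⟨hne2, hβ⟩
    refine ih (B.erase βm) ?_ ?_ β this
    · intro α
      have := h α
      rw [← Finset.add_sum_erase _ _ hmem, hgm, mul_zero, zero_add] at this
      exact this
    · rw [Finset.card_erase_of_mem hmem, hc]; omega

lemma lemB {n : ℕ} (I : Finset (Fin n)) :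
    ∀ (ℓ : ℕ) (S₀ : Finset (Fin n →₀ ℕ)) (μ : (Fin n →₀ ℕ) → F),
    (∀ b ∈ S₀, b.support ⊆ I) → (∀ b ∈ S₀, μ b ≠ 0) → S₀.card ≤ 2 ^ ℓ - 1 →
    (∀ a : Fin n →₀ ℕ, a.support.card < ℓ → ∑ b ∈ S₀, μ b * (binomN b a : F) = 0) →
    S₀ = ∅ := by
  classical
  induction I using Finset.induction_on with
  | empty =>
    intro ℓ S₀ μ hsupp hμ hcard h
    by_contra hne
    obtain ⟨b₀, hb₀⟩ := Finset.nonempty_iff_ne_empty.2 hne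
    have hb0 : b₀ = 0 := by
      have : b₀.support = ∅ := Finset.subset_empty.1 (hsupp b₀ hb₀)
      exact Finsupp.support_eq_empty.1 this
    subst hb0
    have hS : S₀ = {0} := by
      apply Finset.eq_singleton_iff_unique_mem.2
      refine ⟨hb₀, fun b hb => ?_⟩
      have : b.support = ∅ := Finset.subset_empty.1 (hsupp b hb)
      exact Finsupp.support_eq_empty.1 this
    have hℓ : 1 ≤ ℓ := by
      by_contra hl
      interval_cases ℓ
      · simp [hS] at hcard
    have := h 0 (by simp; omega)
    rw [hS, Finset.sum_singleton] at this
    have hb1 : binomN (0 : Fin n →₀ ℕ) 0 = 1 := by simp [binomN]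
    rw [hb1, Nat.cast_one, mul_one] at this
    exact hμ 0 hb₀ this
  | @insert i₀ I' hi₀ ih =>
    intro ℓ S₀ μ hsupp hμ hcard h
    match ℓ with
    | 0 =>
      have : S₀.card = 0 := by omega
      exact Finset.card_eq_zero.1 this
    | (ℓ' + 1) =>
    by_contra hne
    have hSne : S₀.Nonempty := Finset.nonempty_iff_ne_empty.2 hne
    set B := S₀.image (fun b => b i₀) with hB
    have hBne : B.Nonempty := hSne.image _
    -- substep 1 : fiberwise sums vanish for small off-i₀ supports
    have hg : ∀ (a' : Fin n →₀ ℕ), a' i₀ = 0 → a'.support.card < ℓ' → ∀ β ∈ B,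
        ∑ b ∈ S₀.filter (fun b => b i₀ = β), μ b * (binomN b a' : F) = 0 := by
      intro a' ha0 hacard
      apply lemU B
      intro α
      have key : ∑ β ∈ B, (Nat.choose β α : F) *
          ∑ b ∈ S₀.filter (fun b => b i₀ = β), μ b * (binomN b a' : F)
          = ∑ b ∈ S₀, μ b * (binomN b (a' + Finsupp.single i₀ α) : F) := by
        rw [← Finset.sum_fiberwise_of_maps_to (g := fun b => b i₀) (t := B)
          (fun b hb => Finset.mem_image_of_mem _ hb)
          (fun b => μ b * (binomN b (a' + Finsupp.single i₀ α) : F))]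
        apply Finset.sum_congr rfl
        intro β _
        rw [Finset.mul_sum]
        apply Finset.sum_congr rfl
        intro b hb
        have hbβ : b i₀ = β := (Finset.mem_filter.1 hb).2
        rw [binomN_add_single b a' i₀ ha0 α, hbβ, Nat.cast_mul]
        ring
      rw [key]
      apply h
      have := support_card_add_single a' i₀ α
      omega
    -- each b' image setup lemma
    have himg : ∀ (T : Finset (Fin n →₀ ℕ)), T ⊆ S₀ → ∀ β : ℕ, (∀ b ∈ T, b i₀ = β) →
        ∀ (ℓ'' : ℕ), ((∀ a' : Fin n →₀ ℕ, a' i₀ = 0 → a'.support.card < ℓ'' →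
          ∑ b ∈ T, μ b * (binomN b a' : F) = 0) →
          T.card ≤ 2 ^ ℓ'' - 1 → T = ∅) := by
      intro T hTS β hTβ ℓ'' hsum hc
      have hinj : Set.InjOn (fun b : Fin n →₀ ℕ => b.erase i₀) T := by
        intro x hx y hy hxy
        have hx' : x = x.erase i₀ + Finsupp.single i₀ β := by
          rw [← hTβ x hx]; exact (Finsupp.erase_add_single i₀ x).symm
        have hy' : y = y.erase i₀ + Finsupp.single i₀ β := by
          rw [← hTβ y hy]; exact (Finsupp.erase_add_single i₀ y).symm
        rw [hx', hy']; simp only at hxy; rw [hxy]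
      set T' := T.image (fun b => b.erase i₀) with hT'
      have hT'card : T'.card = T.card := Finset.card_image_of_injOn hinj
      have : T' = ∅ := by
        apply ih ℓ'' T' (fun b' => μ (b' + Finsupp.single i₀ β))
        · intro b' hb'
          obtain ⟨b, hb, rfl⟩ := Finset.mem_image.1 hb'
          intro j hj
          rw [Finsupp.support_erase] at hj
          have hj1 : j ≠ i₀ := (Finset.mem_erase.1 hj).1
          have hj2 : j ∈ b.support := (Finset.mem_erase.1 hj).2
          have := hsupp b (hTS hb) hj2
          rcases Finset.mem_insert.1 this with h1 | h2
          · exact absurd h1 hj1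
          · exact h2
        · intro b' hb'
          obtain ⟨b, hb, rfl⟩ := Finset.mem_image.1 hb'
          rw [← hTβ b hb, Finsupp.erase_add_single]
          exact hμ b (hTS hb)
        · omega
        · intro a' ha'
          by_cases ha0 : a' i₀ = 0
          · rw [Finset.sum_image hinj]
            have : ∀ b ∈ T, μ (b.erase i₀ + Finsupp.single i₀ β) * (binomN (b.erase i₀) a' : F)
                = μ b * (binomN b a' : F) := by
              intro b hb
              rw [← hTβ b hb, Finsupp.erase_add_single, binomN_erase b a' i₀ ha0]
            rw [Finset.sum_congr rfl this]
            exact hsum a' ha0 ha'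
          · apply Finset.sum_eq_zero
            intro b' hb'
            obtain ⟨b, hb, rfl⟩ := Finset.mem_image.1 hb'
            have : binomN (b.erase i₀) a' = 0 := by
              apply binomN_zero_of_lt _ _ i₀
              rw [Finsupp.erase_same]
              omega
            rw [this, Nat.cast_zero, mul_zero]
      rw [hT'] at this
      exact Finset.image_eq_empty.1 this
    by_cases hB2 : 2 ≤ B.card
    · -- every fiber has size ≥ 2^ℓ'
      have hfib : ∀ β ∈ B, 2 ^ ℓ' ≤ (S₀.filter (fun b => b i₀ = β)).card := by
        intro β hβ
        by_contra hcf
        have hfne : (S₀.filter (fun b => b i₀ = β)).Nonempty := by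
          obtain ⟨b, hb, hbe⟩ := Finset.mem_image.1 hβ
          exact ⟨b, Finset.mem_filter.2 ⟨hb, hbe⟩⟩
        have := himg (S₀.filter (fun b => b i₀ = β)) (Finset.filter_subset _ _) β
          (fun b hb => (Finset.mem_filter.1 hb).2) ℓ'
          (fun a' ha0 ha' => hg a' ha0 ha' β hβ)
          (by omega)
        exact hfne.ne_empty this
      have hsum : S₀.card = ∑ β ∈ B, (S₀.filter (fun b => b i₀ = β)).card :=
        Finset.card_eq_sum_card_fiberwise (fun b hb => Finset.mem_image_of_mem _ hb)
      have : 2 * 2 ^ ℓ' ≤ S₀.card := by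
        calc 2 * 2 ^ ℓ' ≤ B.card * 2 ^ ℓ' := by
              exact Nat.mul_le_mul_right _ hB2
          _ ≤ ∑ β ∈ B, (S₀.filter (fun b => b i₀ = β)).card := by
              rw [← Finset.sum_const_nat (m := 2 ^ ℓ') (fun x hx => rfl)]
              exact Finset.sum_le_sum hfib
          _ = S₀.card := hsum.symm
      have h2 : 2 ^ (ℓ' + 1) ≤ S₀.card := by rw [pow_succ]; omega
      have hp : 1 ≤ 2 ^ (ℓ' + 1) := Nat.one_le_two_pow
      omega
    · -- single value case
      have hB1 : B.card = 1 := by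
        have := Finset.card_pos.2 hBne
        omega
      obtain ⟨β, hβ⟩ := Finset.card_eq_one.1 hB1
      have hall : ∀ b ∈ S₀, b i₀ = β := by
        intro b hb
        have : b i₀ ∈ B := Finset.mem_image_of_mem _ hb
        rw [hβ] at this
        exact Finset.mem_singleton.1 this
      exact hne (himg S₀ (Finset.Subset.refl _) β hall (ℓ' + 1)
        (fun a' _ ha' => h a' ha') hcard)



variable {n : ℕ}

open MvPolynomial

variable {K : Type*} [CommSemiring K] [Algebra F K]

lemma pow_X_add_C_eq (i : Fin n) (c : K) (β : ℕ) :
    ((X i + C c : MvPolynomial (Fin n) K)) ^ β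
      = ∑ k ∈ Finset.range (β + 1),
          monomial (Finsupp.single i k) (c ^ (β - k) * (β.choose k : K)) := by
  rw [add_pow]
  apply Finset.sum_congr rfl
  intro k _
  rw [X_pow_eq_monomial, ← C_pow,
    show ((β.choose k : ℕ) : MvPolynomial (Fin n) K) = C ((β.choose k : ℕ) : K) from
      (map_natCast (C : K →+* MvPolynomial (Fin n) K) _).symm,
    mul_assoc, ← C_mul, mul_comm ((monomial (Finsupp.single i k)) (1 : K)) (C _),
    C_mul_monomial, mul_one]

lemma support_pow_X_add_C (i : Fin n) (c : K) (β : ℕ) :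
    ∀ m ∈ ((X i + C c : MvPolynomial (Fin n) K) ^ β).support, ∀ j, j ≠ i → m j = 0 := by
  classical
  intro m hm j hj
  rw [pow_X_add_C_eq] at hm
  have := MvPolynomial.support_sum hm
  rw [Finset.mem_biUnion] at this
  obtain ⟨k, _, hk⟩ := this
  have := MvPolynomial.support_monomial_subset hk
  rw [Finset.mem_singleton] at this
  subst this
  exact Finsupp.single_eq_of_ne' (fun h => hj h.symm)

lemma coeff_pow_X_add_C (i : Fin n) (c : K) (β j : ℕ) :
    coeff (Finsupp.single i j) ((X i + C c : MvPolynomial (Fin n) K) ^ β)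
      = c ^ (β - j) * (β.choose j : K) := by
  classical
  rw [pow_X_add_C_eq, coeff_sum]
  have hcong : ∀ k ∈ Finset.range (β + 1),
      coeff (Finsupp.single i j) (monomial (Finsupp.single i k) (c ^ (β - k) * (β.choose k : K)))
        = if k = j then c ^ (β - k) * (β.choose k : K) else 0 := by
    intro k _
    rw [coeff_monomial]
    congr 1
    simp only [eq_iff_iff]
    constructor
    · intro h
      have := congrArg (fun f : Fin n →₀ ℕ => f i) h
      simpa using this
    · rintro rfl; rfl
  rw [Finset.sum_congr rfl hcong, Finset.sum_ite_eq' (Finset.range (β + 1))]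
  by_cases hj : j ∈ Finset.range (β + 1)
  · rw [if_pos hj]
  · rw [if_neg hj]
    have hb : β < j := by
      rw [Finset.mem_range] at hj; omega
    rw [Nat.choose_eq_zero_of_lt hb, Nat.cast_zero, mul_zero]

lemma coeff_mul_of_fresh (i₀ : Fin n) (q r : MvPolynomial (Fin n) K)
    (hq : ∀ m ∈ q.support, m i₀ = 0) (hr : ∀ m ∈ r.support, ∀ j, j ≠ i₀ → m j = 0)
    (a : Fin n →₀ ℕ) :
    coeff a (q * r) = coeff (a.erase i₀) q * coeff (Finsupp.single i₀ (a i₀)) r := by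
  classical
  rw [coeff_mul]
  apply Finset.sum_eq_single (a.erase i₀, Finsupp.single i₀ (a i₀))
  · intro p hp hne
    by_cases h1 : coeff p.1 q = 0
    · rw [h1, zero_mul]
    by_cases h2 : coeff p.2 r = 0
    · rw [h2, mul_zero]
    exfalso
    have hm : p.1 + p.2 = a := Finset.HasAntidiagonal.mem_antidiagonal.1 hp
    have hp1 : p.1 i₀ = 0 := hq p.1 (mem_support_iff.2 h1)
    have hp2 : ∀ j, j ≠ i₀ → p.2 j = 0 := hr p.2 (mem_support_iff.2 h2)
    apply hne
    have e1 : p.1 = a.erase i₀ := by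
      ext j
      by_cases hj : j = i₀
      · subst hj; rw [Finsupp.erase_same]; exact hp1
      · rw [Finsupp.erase_ne hj, ← hm, Finsupp.add_apply, hp2 j hj, add_zero]
    have e2 : p.2 = Finsupp.single i₀ (a i₀) := by
      ext j
      by_cases hj : j = i₀
      · subst hj
        rw [Finsupp.single_eq_same, ← hm, Finsupp.add_apply, hp1, zero_add]
      · rw [Finsupp.single_eq_of_ne' (fun h => hj h.symm)]
        exact hp2 j hj
    exact Prod.ext e1 e2
  · intro habs
    exact absurd (Finset.HasAntidiagonal.mem_antidiagonal.2 (Finsupp.erase_add_single i₀ a)) habs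

lemma vars_pow_X_add_C [Nontrivial K] (i : Fin n) (c : K) (β : ℕ) :
    ((X i + C c : MvPolynomial (Fin n) K) ^ β).vars ⊆ {i} := by
  classical
  refine (vars_pow _ _).trans ?_
  refine (vars_add_subset _ _).trans ?_
  rw [vars_C]
  refine Finset.union_subset ?_ (Finset.empty_subset _)
  exact subset_of_eq vars_X

lemma coeff_prod_shift [Nontrivial K] (s : Fin n → K) (T : Finset (Fin n)) (f : Fin n → ℕ)
    (a : Fin n →₀ ℕ) :
    coeff a (∏ i ∈ T, ((X i + C (s i) : MvPolynomial (Fin n) K)) ^ (f i))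
      = if ∀ j, j ∉ T → a j = 0 then
          ∏ i ∈ T, (s i) ^ (f i - a i) * ((f i).choose (a i) : K)
        else 0 := by
  classical
  induction T using Finset.induction_on generalizing a with
  | empty =>
    rw [Finset.prod_empty, MvPolynomial.coeff_one]
    by_cases h : a = 0
    · subst h
      rw [if_pos rfl, if_pos, Finset.prod_empty]
      intro j _
      rfl
    · rw [if_neg (fun hh => h hh.symm), if_neg]
      intro hall
      exact h (Finsupp.ext (fun j => hall j (Finset.notMem_empty j)))
  | @insert i₀ T hi₀ ih =>
    rw [Finset.prod_insert hi₀, mul_comm]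
    rw [coeff_mul_of_fresh i₀ _ _ ?hq ?hr a]
    case hq =>
      intro m hm
      by_contra hmne
      have h1 : i₀ ∈ (∏ i ∈ T, ((X i + C (s i) : MvPolynomial (Fin n) K)) ^ (f i)).vars :=
        (mem_vars i₀).2 ⟨m, hm, Finsupp.mem_support_iff.2 hmne⟩
      have h2 := MvPolynomial.vars_prod (s := T)
        (f := fun i => ((X i + C (s i) : MvPolynomial (Fin n) K)) ^ (f i)) h1
      rw [Finset.mem_biUnion] at h2
      obtain ⟨i, hiT, hivars⟩ := h2
      have := vars_pow_X_add_C i (s i) (f i) hivars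
      rw [Finset.mem_singleton] at this
      subst this
      exact hi₀ hiT
    case hr => exact support_pow_X_add_C i₀ (s i₀) (f i₀)
    rw [ih, coeff_pow_X_add_C]
    have hva : ∀ i ∈ T, (a.erase i₀) i = a i := by
      intro i hiT
      exact Finsupp.erase_ne (fun h => hi₀ (h ▸ hiT))
    by_cases hcond : ∀ j, j ∉ insert i₀ T → a j = 0
    · have hcond' : ∀ j, j ∉ T → (a.erase i₀) j = 0 := by
        intro j hj
        by_cases hji : j = i₀
        · subst hji; exact Finsupp.erase_same
        · rw [Finsupp.erase_ne hji]
          exact hcond j (by simp [hji, hj])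
      rw [if_pos hcond, if_pos hcond', Finset.prod_insert hi₀]
      rw [Finset.prod_congr rfl (fun i hiT => by rw [hva i hiT])]
      ring
    · rw [if_neg hcond]
      have : ¬ (∀ j, j ∉ T → (a.erase i₀) j = 0) := by
        intro hc
        apply hcond
        intro j hj
        have hjne : j ≠ i₀ := fun h => hj (h ▸ Finset.mem_insert_self i₀ T)
        have hjT : j ∉ T := fun h => hj (Finset.mem_insert_of_mem h)
        have := hc j hjT
        rwa [Finsupp.erase_ne hjne] at this
      rw [if_neg this, zero_mul]

lemma coeff_shift [Nontrivial K] (s : Fin n → K) (p : MvPolynomial (Fin n) F) (a : Fin n →₀ ℕ) :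
    coeff a (aeval (fun i => (X i + C (s i) : MvPolynomial (Fin n) K)) p)
      = ∑ e ∈ p.support, algebraMap F K (coeff e p) *
          ∏ i : Fin n, (s i) ^ (e i - a i) * ((e i).choose (a i) : K) := by
  classical
  conv_lhs => rw [p.as_sum, map_sum, coeff_sum]
  apply Finset.sum_congr rfl
  intro e _
  rw [aeval_monomial, MvPolynomial.algebraMap_apply, coeff_C_mul]
  congr 1
  have hprod : (e.prod fun i k => (X i + C (s i) : MvPolynomial (Fin n) K) ^ k)
      = ∏ i ∈ e.support, ((X i + C (s i) : MvPolynomial (Fin n) K)) ^ (e i) := rfl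
  rw [hprod, coeff_prod_shift]
  by_cases hcond : ∀ j, j ∉ e.support → a j = 0
  · rw [if_pos hcond]
    rw [← Finset.prod_subset (Finset.subset_univ e.support)]
    intro i _ his
    have he0 : e i = 0 := Finsupp.notMem_support_iff.1 his
    have ha0 : a i = 0 := hcond i his
    rw [he0, ha0]
    norm_num
  · rw [if_neg hcond]
    push_neg at hcond
    obtain ⟨j, hjs, hja⟩ := hcond
    rw [eq_comm]
    apply Finset.prod_eq_zero (Finset.mem_univ j)
    have he0 : e j = 0 := Finsupp.notMem_support_iff.1 hjs
    rw [he0, Nat.choose_eq_zero_of_lt (by omega), Nat.cast_zero, mul_zero]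


lemma exists_box (n d : ℕ) : ∃ E : Finset (Fin n →₀ ℕ), ∀ e : Fin n →₀ ℕ, e ∈ E ↔ ∀ i, e i ≤ d := by
  classical
  refine ⟨Finset.univ.image
    (fun f : Fin n → Fin (d+1) => Finsupp.equivFunOnFinite.symm (fun i => (f i : ℕ))), ?_⟩
  intro e
  constructor
  · intro he i
    obtain ⟨f, _, rfl⟩ := Finset.mem_image.1 he
    have : (Finsupp.equivFunOnFinite.symm (fun i => ((f i : ℕ)))) i = (f i : ℕ) := rfl
    rw [this]
    exact Fin.is_le _
  · intro hle
    apply Finset.mem_image.2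
    refine ⟨fun i => ⟨e i, by have := hle i; omega⟩, Finset.mem_univ _, ?_⟩
    have : (fun i => ((⟨e i, by have := hle i; omega⟩ : Fin (d+1)) : ℕ)) = ⇑e := rfl
    rw [this]
    exact Finsupp.equivFunOnFinite.symm_apply_apply e

end Aux

set_option synthInstance.maxHeartbeats 1000000
set_option maxHeartbeats 1000000

/-- Lemma 5.2 of the paper, isolation to concentration: if `wt` is a basis
isolating weight assignment for the matrix polynomial `A` of individual degree ≤ d over the
`k`-dimensional algebra `F^{m×m'}` (`k = m·m'`), then the shift `xᵢ ↦ xᵢ + t^{wt i}` makes `A`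
`⌈log₂(k+1)⌉`-concentrated over `F(t)`. -/
theorem basis_isolating_weight_gives_concentration
    {F : Type*} [Field F] {n d m m' : ℕ}
    (A : Matrix (Fin m) (Fin m') (MvPolynomial (Fin n) F))
    (hdeg : ∀ r c, IndivDegLE d (A r c))
    (wt : Fin n → ℕ)
    (S : Finset (Fin n →₀ ℕ))
    (hSdeg : ∀ b ∈ S, ∀ i, b i ≤ d)
    (hScard : S.card ≤ m * m')
    (hSinj : ∀ a ∈ S, ∀ b ∈ S, (∑ i, wt i * a i) = (∑ i, wt i * b i) → a = b)
    (hiso : ∀ a : Fin n →₀ ℕ, (∀ i, a i ≤ d) → a ∉ S →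
      (Matrix.of fun r c => (A r c).coeff a) ∈ Submodule.span F
        {v : Matrix (Fin m) (Fin m') F | ∃ b ∈ S,
          (∑ i, wt i * b i) < (∑ i, wt i * a i) ∧
          v = Matrix.of fun r c => (A r c).coeff b}) :
    Concentrated (RatFunc F) (Nat.clog 2 (m * m' + 1))
      (fun a => Matrix.of fun r c =>
        (shiftBy (fun i => Polynomial.X ^ wt i) (A r c)).coeff a) := by
  classical
  set ℓ := Nat.clog 2 (m * m' + 1) with hℓ
  set w : (Fin n →₀ ℕ) → ℕ := fun e => ∑ i, wt i * e i with hw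
  set tK : (RatFunc F) := algebraMap (Polynomial F) (RatFunc F) Polynomial.X with htK
  set cV : (Fin n →₀ ℕ) → Matrix (Fin m) (Fin m') F :=
    fun e => Matrix.of fun r c => (A r c).coeff e with hcV
  set cK : (Fin n →₀ ℕ) → Matrix (Fin m) (Fin m') (RatFunc F) :=
    fun e => (cV e).map (algebraMap F (RatFunc F)) with hcK
  set c' : (Fin n →₀ ℕ) → Matrix (Fin m) (Fin m') (RatFunc F) := fun a => Matrix.of fun r c =>
    (shiftBy (fun i => Polynomial.X ^ wt i) (A r c)).coeff a with hc'
  obtain ⟨E, hE⟩ := exists_box n d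
  set γ : (Fin n →₀ ℕ) → (Fin n →₀ ℕ) → (RatFunc F) :=
    fun a e => (binomN e a : (RatFunc F)) * tK ^ (∑ i, wt i * (e i - a i)) with hγ
  have step0 : ∀ a e : Fin n →₀ ℕ,
      (∏ i : Fin n, (algebraMap (Polynomial F) (RatFunc F) (Polynomial.X ^ wt i)) ^ (e i - a i) *
        ((e i).choose (a i) : (RatFunc F))) = γ a e := by
    intro a e
    rw [Finset.prod_mul_distrib, hγ]
    simp only []
    rw [mul_comm]
    congr 1
    · exact (Nat.cast_prod _ _).symm
    · rw [← Finset.prod_pow_eq_pow_sum]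
      apply Finset.prod_congr rfl
      intro i _
      rw [map_pow, ← pow_mul]
  have step1 : ∀ a : Fin n →₀ ℕ, c' a = ∑ e ∈ E, γ a e • cK e := by
    intro a
    ext r c
    show (shiftBy (fun i => Polynomial.X ^ wt i) (A r c)).coeff a = _
    rw [shiftBy, coeff_shift (fun i => algebraMap (Polynomial F) (RatFunc F) (Polynomial.X ^ wt i))
      (A r c) a]
    rw [Finset.sum_subset (fun e he => (hE e).2 (fun i => hdeg r c e he i))
      (fun e _ he => by
        rw [MvPolynomial.notMem_support_iff.1 he, map_zero, zero_mul])]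
    have hrhs : (∑ x ∈ E, γ a x • cK x) r c
        = ∑ x ∈ E, γ a x * algebraMap F (RatFunc F) ((A r c).coeff x) := by
      rw [Matrix.sum_apply]
      apply Finset.sum_congr rfl
      intro x _
      rw [Matrix.smul_apply, smul_eq_mul]
      rfl
    rw [hrhs]
    apply Finset.sum_congr rfl
    intro e _
    rw [step0 a e, mul_comm]
  have hκe : ∀ e : Fin n →₀ ℕ, ∃ kf : (Fin n →₀ ℕ) → F,
      (e ∈ E → cV e = ∑ b ∈ S, kf b • cV b) ∧
      (∀ b, kf b ≠ 0 → b ∈ S ∧ (e = b ∨ w b < w e)) ∧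
      (e ∈ S → ∀ b, kf b = if b = e then 1 else 0) := by
    intro e
    by_cases he : e ∈ S
    · refine ⟨fun b => if b = e then 1 else 0, fun _ => ?_, fun b hb => ?_, fun _ b => rfl⟩
      · rw [Finset.sum_eq_single e]
        · simp
        · intro b _ hbe
          simp [hbe]
        · intro habs
          exact absurd he habs
      · by_cases hbe : b = e
        · subst hbe
          exact ⟨he, Or.inl rfl⟩
        · simp [hbe] at hb
    · by_cases heE : e ∈ E
      · have hiso' := hiso e (fun i => (hE e).1 heE i) he
        have hset : {v : Matrix (Fin m) (Fin m') F | ∃ b ∈ S,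
            (∑ i, wt i * b i) < (∑ i, wt i * e i) ∧
            v = Matrix.of fun r c => (A r c).coeff b}
            = cV '' {b | b ∈ S ∧ w b < w e} := by
          ext v
          constructor
          · rintro ⟨b, hbS, hlt, rfl⟩
            exact ⟨b, ⟨hbS, hlt⟩, rfl⟩
          · rintro ⟨b, ⟨hbS, hlt⟩, rfl⟩
            exact ⟨b, hbS, hlt, rfl⟩
        rw [hset] at hiso'
        obtain ⟨l, hl, hle⟩ := (Finsupp.mem_span_image_iff_linearCombination F).1 hiso'
        have hlsup : ∀ b ∈ l.support, b ∈ S ∧ w b < w e :=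
          fun b hb => ((Finsupp.mem_supported F l).1 hl) hb
        refine ⟨⇑l, fun _ => ?_, fun b hb => ?_, fun heS => absurd heS he⟩
        · have hle' : Finsupp.linearCombination F cV l = cV e := hle
          rw [← hle', Finsupp.linearCombination_apply]
          exact Finsupp.sum_of_support_subset l (fun b hb => (hlsup b hb).1)
            (fun i a => a • cV i) (fun i _ => zero_smul F _)
        · have := hlsup b (Finsupp.mem_support_iff.2 hb)
          exact ⟨this.1, Or.inr this.2⟩
      · exact ⟨0, fun hEe => absurd hEe heE, fun b hb => absurd rfl hb,
          fun heS => absurd heS he⟩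
  choose k hk1 hk2 hk3 using hκe
  have hcKrep : ∀ e ∈ E, cK e = ∑ b ∈ S, algebraMap F (RatFunc F) (k e b) • cK b := by
    intro e he
    ext r c
    have h1 : cV e r c = ∑ b ∈ S, k e b * cV b r c := by
      rw [hk1 e he, Matrix.sum_apply]
      apply Finset.sum_congr rfl
      intro b _
      rw [Matrix.smul_apply, smul_eq_mul]
    show algebraMap F (RatFunc F) (cV e r c) = _
    rw [h1, map_sum, Matrix.sum_apply]
    apply Finset.sum_congr rfl
    intro b _
    rw [Matrix.smul_apply, smul_eq_mul, _root_.map_mul]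
    rfl
  set Mc : (Fin n →₀ ℕ) → (Fin n →₀ ℕ) → (RatFunc F) :=
    fun a b => ∑ e ∈ E, γ a e * algebraMap F (RatFunc F) (k e b) with hMc
  have step2 : ∀ a : Fin n →₀ ℕ, c' a = ∑ b ∈ S, Mc a b • cK b := by
    intro a
    rw [step1 a]
    calc ∑ e ∈ E, γ a e • cK e
        = ∑ e ∈ E, ∑ b ∈ S, (γ a e * algebraMap F (RatFunc F) (k e b)) • cK b := by
          apply Finset.sum_congr rfl
          intro e he
          rw [hcKrep e he, Finset.smul_sum]
          apply Finset.sum_congr rfl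
          intro b _
          rw [smul_smul]
      _ = ∑ b ∈ S, Mc a b • cK b := by
          rw [Finset.sum_comm]
          apply Finset.sum_congr rfl
          intro b _
          rw [hMc]
          simp only []
          rw [Finset.sum_smul]
  set Na : (Fin n →₀ ℕ) → (Fin n →₀ ℕ) → Polynomial F :=
    fun b a => ∑ e ∈ E, Polynomial.C (k e b * (binomN e a : F)) * Polynomial.X ^ (w e) with hNa
  have hC3 : ∀ a b : Fin n →₀ ℕ, algebraMap (Polynomial F) (RatFunc F) (Na b a) = tK ^ (w a) * Mc a b := by
    intro a b
    rw [hNa, hMc]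
    simp only []
    rw [map_sum, Finset.mul_sum]
    apply Finset.sum_congr rfl
    intro e _
    rw [Polynomial.C_mul, _root_.map_mul, _root_.map_mul, map_pow]
    have h1 : (algebraMap (Polynomial F) (RatFunc F)) (Polynomial.C (k e b))
        = algebraMap F (RatFunc F) (k e b) := by
      rw [← Polynomial.algebraMap_eq, ← IsScalarTower.algebraMap_apply]
    have h2 : (algebraMap (Polynomial F) (RatFunc F)) (Polynomial.C ((binomN e a : F)))
        = ((binomN e a : ℕ) : RatFunc F) := by
      rw [← Polynomial.algebraMap_eq, ← IsScalarTower.algebraMap_apply, map_natCast]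
    rw [h1, h2, hγ]
    simp only []
    by_cases hb0 : binomN e a = 0
    · rw [hb0]
      simp
    · have hle : ∀ i, a i ≤ e i := by
        intro i
        by_contra hcon
        exact hb0 (binomN_zero_of_lt e a i (by omega))
      have hwsum : w a + (∑ i, wt i * (e i - a i)) = w e := by
        rw [hw]
        simp only []
        rw [← Finset.sum_add_distrib]
        apply Finset.sum_congr rfl
        intro i _
        have h3 : a i + (e i - a i) = e i := by have := hle i; omega
        rw [← Nat.left_distrib, h3]
      rw [← hwsum, pow_add]
      ring
  have hNcoeff : ∀ b a : Fin n →₀ ℕ, ∀ j : ℕ,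
      (Na b a).coeff j = ∑ e ∈ E, if j = w e then k e b * (binomN e a : F) else 0 := by
    intro b a j
    rw [hNa]
    simp only []
    rw [Polynomial.finset_sum_coeff]
    apply Finset.sum_congr rfl
    intro e _
    rw [Polynomial.coeff_C_mul, Polynomial.coeff_X_pow, mul_ite, mul_one, mul_zero]
  have hQ2 : ∀ b ∈ S, ∀ a : Fin n →₀ ℕ, ∀ j : ℕ, j < w b → (Na b a).coeff j = 0 := by
    intro b hbS a j hj
    rw [hNcoeff]
    apply Finset.sum_eq_zero
    intro e _
    by_cases hwe : j = w e
    · rw [if_pos hwe]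
      have hke : k e b = 0 := by
        by_contra hk0
        rcases (hk2 e b hk0).2 with rfl | hlt
        · omega
        · omega
      rw [hke, zero_mul]
    · rw [if_neg hwe]
  have hQ3 : ∀ b ∈ S, ∀ a : Fin n →₀ ℕ, (Na b a).coeff (w b) = (binomN b a : F) := by
    intro b hbS a
    rw [hNcoeff]
    rw [Finset.sum_eq_single b]
    · rw [if_pos rfl, hk3 b hbS b, if_pos rfl, one_mul]
    · intro e _ hne
      by_cases hwe : w b = w e
      · rw [if_pos hwe]
        have hke : k e b = 0 := by
          by_contra hk0
          rcases (hk2 e b hk0).2 with rfl | hlt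
          · exact hne rfl
          · omega
        rw [hke, zero_mul]
      · rw [if_neg hwe]
    · intro habs
      exact absurd ((hE b).2 (hSdeg b hbS)) habs
  set 𝒜 : Finset (Fin n →₀ ℕ) := E.filter (fun x => x.support.card < ℓ) with h𝒜
  have main : ∀ bhat ∈ S, cK bhat ∈ Submodule.span (RatFunc F) (c' '' {b | b.support.card < ℓ}) := by
    set colM : (Fin n →₀ ℕ) → ({x // x ∈ S} → RatFunc F) := fun a => fun b => Mc a b.val with hcolM
    set Ucol : Submodule (RatFunc F) ({x // x ∈ S} → RatFunc F) :=
      Submodule.span (RatFunc F) (colM '' ↑𝒜) with hUcol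
    by_cases hU : Ucol = ⊤
    · intro bhat hbhat
      have hmem : (fun b : {x // x ∈ S} => if b.val = bhat then (1 : RatFunc F) else 0) ∈ Ucol := by
        rw [hU]; exact Submodule.mem_top
      rw [hUcol] at hmem
      obtain ⟨μ, hμsupp, hμeq⟩ := (Finsupp.mem_span_image_iff_linearCombination (RatFunc F)).1 hmem
      have hμsub : μ.support ⊆ 𝒜 :=
        fun x hx => Finset.mem_coe.1 (((Finsupp.mem_supported (RatFunc F) μ).1 hμsupp) hx)
      have hrep : ∀ b : {x // x ∈ S},
          ∑ x ∈ 𝒜, μ x * Mc x b.val = if b.val = bhat then 1 else 0 := by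
        intro b
        rw [Finsupp.linearCombination_apply, Finsupp.sum_of_support_subset μ hμsub
          (fun a c => c • colM a) (fun i _ => by simp)] at hμeq
        have h0 := congrFun hμeq b
        rw [Finset.sum_apply] at h0
        rw [← h0]
        apply Finset.sum_congr rfl
        intro x _
        rfl
      have hsum : ∑ x ∈ 𝒜, μ x • c' x = cK bhat := by
        calc ∑ x ∈ 𝒜, μ x • c' x
            = ∑ x ∈ 𝒜, ∑ b ∈ S, (μ x * Mc x b) • cK b := by
              apply Finset.sum_congr rfl
              intro x _
              rw [step2 x, Finset.smul_sum]
              apply Finset.sum_congr rfl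
              intro b _
              rw [smul_smul]
          _ = ∑ b ∈ S, (∑ x ∈ 𝒜, μ x * Mc x b) • cK b := by
              rw [Finset.sum_comm]
              apply Finset.sum_congr rfl
              intro b _
              rw [Finset.sum_smul]
          _ = cK bhat := by
              rw [Finset.sum_eq_single bhat]
              · have h1 := hrep ⟨bhat, hbhat⟩
                rw [if_pos rfl] at h1
                rw [h1, one_smul]
              · intro b hbS hne
                have h1 := hrep ⟨b, hbS⟩
                rw [if_neg hne] at h1
                rw [h1, zero_smul]
              · intro habs
                exact absurd hbhat habs
      rw [← hsum]
      apply Submodule.sum_mem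
      intro x hx
      apply Submodule.smul_mem
      apply Submodule.subset_span
      exact Set.mem_image_of_mem c'
        (show x ∈ {b : Fin n →₀ ℕ | b.support.card < ℓ} from (Finset.mem_filter.1 hx).2)
    · exfalso
      obtain ⟨f, hf0, hfbot⟩ :=
        Submodule.exists_dual_map_eq_bot_of_lt_top (lt_top_iff_ne_top.2 hU) inferInstance
      set lam : {x // x ∈ S} → RatFunc F := fun b => f (fun j => if b = j then 1 else 0) with hlam
      have hfv : ∀ v : {x // x ∈ S} → RatFunc F, f v = ∑ b, v b * lam b := by
        intro v
        conv_lhs => rw [pi_eq_sum_univ v]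
        rw [map_sum]
        apply Finset.sum_congr rfl
        intro b _
        rw [_root_.map_smul, smul_eq_mul]
      have hlamex : ∃ b, lam b ≠ 0 := by
        by_contra hall
        push_neg at hall
        apply hf0
        apply LinearMap.ext
        intro v
        rw [hfv v]
        simp [hall]
      have hkey : ∀ x ∈ 𝒜, ∑ b, Mc x b.val * lam b = 0 := by
        intro x hx
        have hmem : colM x ∈ Ucol :=
          Submodule.subset_span (Set.mem_image_of_mem _ (Finset.mem_coe.2 hx))
        have hfx : f (colM x) = 0 := by
          have h1 : f (colM x) ∈ Ucol.map f := Submodule.mem_map_of_mem hmem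
          rw [hfbot] at h1
          exact (Submodule.mem_bot (RatFunc F)).1 h1
        rw [hfv] at hfx
        exact hfx
      set q : Polynomial F := ∏ b, (lam b).denom with hq
      set pp : {x // x ∈ S} → Polynomial F :=
        fun b => (lam b).num * ∏ b' ∈ Finset.univ.erase b, (lam b').denom with hpp
      have halg : ∀ b, algebraMap (Polynomial F) (RatFunc F) (pp b)
          = lam b * algebraMap (Polynomial F) (RatFunc F) q := by
        intro b
        rw [hpp, hq]
        simp only []
        rw [_root_.map_mul, map_prod, map_prod]
        have hnum : algebraMap (Polynomial F) (RatFunc F) (lam b).num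
            = lam b * algebraMap (Polynomial F) (RatFunc F) (lam b).denom := by
          rw [← (div_eq_iff (RatFunc.algebraMap_ne_zero (RatFunc.denom_ne_zero (lam b))))]
          exact RatFunc.num_div_denom (lam b)
        rw [hnum, ← Finset.mul_prod_erase Finset.univ
          (fun b' => algebraMap (Polynomial F) (RatFunc F) (lam b').denom) (Finset.mem_univ b)]
        ring
      obtain ⟨b₀, hb₀⟩ := hlamex
      have hppb₀ : pp b₀ ≠ 0 := by
        apply mul_ne_zero (RatFunc.num_ne_zero hb₀)
        rw [Finset.prod_ne_zero_iff]
        exact fun b' _ => RatFunc.denom_ne_zero _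
      have hpoly : ∀ x ∈ 𝒜, ∑ b, pp b * Na b.val x = 0 := by
        intro x hx
        apply RatFunc.algebraMap_injective F
        rw [map_sum, map_zero]
        calc ∑ b, algebraMap (Polynomial F) (RatFunc F) (pp b * Na b.val x)
            = ∑ b, (algebraMap (Polynomial F) (RatFunc F) q * tK ^ (w x)) * (Mc x b.val * lam b) := by
              apply Finset.sum_congr rfl
              intro b _
              rw [_root_.map_mul, halg b, hC3 x b.val]
              ring
          _ = 0 := by
              rw [← Finset.mul_sum, hkey x hx, mul_zero]
      set S'' : Finset {x // x ∈ S} := Finset.univ.filter (fun b => pp b ≠ 0) with hS''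
      have hS''ne : S''.Nonempty := ⟨b₀, Finset.mem_filter.2 ⟨Finset.mem_univ _, hppb₀⟩⟩
      set vstar := ((S''.image (fun b => (pp b).natTrailingDegree + w b.val)).min'
        (hS''ne.image _)) with hvstar
      have hvle : ∀ b, pp b ≠ 0 → vstar ≤ (pp b).natTrailingDegree + w b.val := by
        intro b hb
        apply Finset.min'_le
        exact Finset.mem_image_of_mem _ (Finset.mem_filter.2 ⟨Finset.mem_univ _, hb⟩)
      obtain ⟨bs, hbsS'', hbseq⟩ : ∃ bb ∈ S'', (pp bb).natTrailingDegree + w bb.val = vstar := by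
        have hmm := (S''.image (fun b => (pp b).natTrailingDegree + w b.val)).min'_mem
          (hS''ne.image _)
        obtain ⟨bb, hbb, hbbeq⟩ := Finset.mem_image.1 hmm
        exact ⟨bb, hbb, hbbeq⟩
      have hbs0 : pp bs ≠ 0 := (Finset.mem_filter.1 hbsS'').2
      set muF : (Fin n →₀ ℕ) → F := fun x =>
        if hx : x ∈ S then (if w x ≤ vstar then (pp ⟨x, hx⟩).coeff (vstar - w x) else 0) else 0
        with hmuF
      have hmu : ∀ b : {x // x ∈ S},
          muF b.val = if w b.val ≤ vstar then (pp b).coeff (vstar - w b.val) else 0 := by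
        intro b
        rw [hmuF]
        simp only [Subtype.coe_eta]
        rw [dif_pos b.prop]
      have hterm : ∀ (x : Fin n →₀ ℕ) (b : {x // x ∈ S}),
          (pp b * Na b.val x).coeff vstar = muF b.val * (binomN b.val x : F) := by
        intro x b
        rw [hmu b]
        by_cases hpb : pp b = 0
        · rw [hpb, zero_mul, Polynomial.coeff_zero]
          split_ifs <;> simp
        · by_cases hwb : w b.val ≤ vstar
          · rw [if_pos hwb, Polynomial.coeff_mul]
            rw [Finset.sum_eq_single (vstar - w b.val, w b.val)]
            · rw [hQ3 b.val b.prop x]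
            · intro y hy hyne
              have hysum : y.1 + y.2 = vstar := Finset.HasAntidiagonal.mem_antidiagonal.1 hy
              by_cases h2 : y.2 < w b.val
              · rw [hQ2 b.val b.prop x y.2 h2, mul_zero]
              · have h2' : y.2 ≠ w b.val := by
                  intro he
                  apply hyne
                  have h3 : y.1 = vstar - w b.val := by omega
                  exact Prod.ext h3 he
                have hgt : w b.val < y.2 := by omega
                have h4 : y.1 < (pp b).natTrailingDegree := by
                  have := hvle b hpb
                  omega
                rw [Polynomial.coeff_eq_zero_of_lt_natTrailingDegree h4, zero_mul]
            · intro habs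
              exact absurd (Finset.HasAntidiagonal.mem_antidiagonal.2 (by omega)) habs
          · rw [if_neg hwb, zero_mul, Polynomial.coeff_mul]
            apply Finset.sum_eq_zero
            intro y hy
            have hysum : y.1 + y.2 = vstar := Finset.HasAntidiagonal.mem_antidiagonal.1 hy
            have h2 : y.2 < w b.val := by omega
            rw [hQ2 b.val b.prop x y.2 h2, mul_zero]
      have hsum0 : ∀ x ∈ 𝒜, ∑ b : {x // x ∈ S}, muF b.val * (binomN b.val x : F) = 0 := by
        intro x hx
        have h1 := congrArg (fun P => Polynomial.coeff P vstar) (hpoly x hx)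
        simp only [Polynomial.coeff_zero] at h1
        rw [Polynomial.finset_sum_coeff] at h1
        exact (Finset.sum_congr rfl (fun b _ => (hterm x b).symm)).trans h1
      set T : Finset (Fin n →₀ ℕ) := S.filter (fun x => muF x ≠ 0) with hT
      have hTsum : ∀ a' : Fin n →₀ ℕ, a'.support.card < ℓ →
          ∑ x ∈ T, muF x * (binomN x a' : F) = 0 := by
        intro a' ha'
        have h1 : ∑ x ∈ S, muF x * (binomN x a' : F) = 0 := by
          by_cases hbox : a' ∈ E
          · have hx𝒜 : a' ∈ 𝒜 := Finset.mem_filter.2 ⟨hbox, ha'⟩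
            have h2 := hsum0 a' hx𝒜
            rw [← Finset.sum_coe_sort S (fun x => muF x * (binomN x a' : F))]
            exact h2
          · apply Finset.sum_eq_zero
            intro x hxS
            have h3 : ∃ i, d < a' i := by
              by_contra hno
              push_neg at hno
              exact hbox ((hE a').2 hno)
            obtain ⟨i, hi⟩ := h3
            rw [binomN_zero_of_lt x a' i (lt_of_le_of_lt (hSdeg x hxS i) hi), Nat.cast_zero,
              mul_zero]
        rw [hT]
        rw [Finset.sum_filter_of_ne]
        · exact h1
        · intro x _ hfx
          intro hmx
          apply hfx
          rw [hmx, zero_mul]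
      have hTcard : T.card ≤ 2 ^ ℓ - 1 := by
        have h1 : T.card ≤ S.card := Finset.card_filter_le _ _
        have h2 : m * m' + 1 ≤ 2 ^ ℓ := Nat.le_pow_clog (by norm_num) _
        omega
      have hTempty := lemB Finset.univ ℓ T muF (fun b _ => Finset.subset_univ _)
        (fun b hb => (Finset.mem_filter.1 hb).2) hTcard hTsum
      have hbsT : bs.val ∈ T := by
        refine Finset.mem_filter.2 ⟨bs.prop, ?_⟩
        have hwle : w bs.val ≤ vstar := by omega
        have hsub : vstar - w bs.val = (pp bs).natTrailingDegree := by omega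
        rw [hmu bs, if_pos hwle, hsub]
        intro hzero
        exact hbs0 (Polynomial.trailingCoeff_eq_zero.1 hzero)
      rw [hTempty] at hbsT
      exact absurd hbsT (Finset.notMem_empty _)
  intro a₀
  rw [step2 a₀]
  apply Submodule.sum_mem
  intro b hb
  exact Submodule.smul_mem _ _ (main b hb)
end

section
/- Let F be a field and let n, d ≥ 1 and ℓ ≥ 1 be integers. Let M = {0,1,…,d}^n and M_ℓ = {a ∈ M : supp(a) < ℓ}. Define the M_ℓ × M matrix T_ℓ over F whose entry at row a ∈ M_ℓ and column b ∈ M is the product of binomial coefficients ∏_{i=1}^n C(b_i, a_i), viewed in F. Then any set of at most 2^ℓ − 1 columns of T_ℓ is F-linearly independent. -/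
open MvPolynomial Matrix

open Finset Classical in
lemma card_filter_snoc {n : ℕ} (a' : Fin n → ℕ) (j : ℕ) :
    (Finset.univ.filter fun i => (Fin.snoc a' j : Fin (n+1) → ℕ) i ≠ 0).card =
    (Finset.univ.filter fun i => a' i ≠ 0).card + (if j = 0 then 0 else 1) := by
  rw [Finset.card_filter, Finset.card_filter, Fin.sum_univ_castSucc]
  simp [Fin.snoc_castSucc, Fin.snoc_last]

open Finset Classical in
lemma key_transfer {F : Type*} [Field F] :
    ∀ (n ℓ : ℕ), 1 ≤ ℓ →
    ∀ (S : Finset (Fin n → ℕ)) (c : (Fin n → ℕ) → F),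
      S.Nonempty → (∀ b ∈ S, c b ≠ 0) → S.card ≤ 2 ^ ℓ - 1 →
      ∃ a : Fin n → ℕ, (Finset.univ.filter fun i => a i ≠ 0).card < ℓ ∧
        ∑ b ∈ S, c b * ∏ i, (Nat.choose (b i) (a i) : F) ≠ 0 := by
  intro n
  induction n with
  | zero =>
    intro ℓ hℓ S c hne hc _
    obtain ⟨b, hb⟩ := hne
    have hSb : S = {b} :=
      Finset.eq_singleton_iff_unique_mem.2 ⟨hb, fun x _ => Subsingleton.elim x b⟩
    refine ⟨fun _ => 0, ?_, ?_⟩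
    · simpa using (show 0 < ℓ by omega)
    · rw [hSb]
      simpa using hc b hb
  | succ n IH =>
    intro ℓ hℓ S c hne hc hcard
    set I : Finset (Fin n → ℕ) := S.image Fin.init with hI
    set c' : ℕ → (Fin n → ℕ) → F := fun j m =>
      ∑ b ∈ S.filter (fun b => Fin.init b = m),
        (Nat.choose (b (Fin.last n)) j : F) * c b with hc'
    have identity : ∀ (a' : Fin n → ℕ) (j : ℕ),
        ∑ m ∈ I, c' j m * ∏ i, (Nat.choose (m i) (a' i) : F)
        = ∑ b ∈ S, c b * ∏ i, (Nat.choose (b i) ((Fin.snoc a' j : Fin (n+1) → ℕ) i) : F) := by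
      intro a' j
      rw [hI]
      refine Finset.sum_image' _ (fun b hb => ?_)
      rw [hc']
      rw [Finset.sum_mul]
      refine Finset.sum_congr rfl (fun b' hb' => ?_)
      have hinit : Fin.init b' = Fin.init b := (Finset.mem_filter.1 hb').2
      rw [Fin.prod_univ_castSucc]
      simp only [Fin.snoc_castSucc, Fin.snoc_last, ← hinit]
      have : ∀ i : Fin n, Fin.init b' i = b' (Fin.castSucc i) := fun i => rfl
      simp only [this]
      ring
    -- case split
    by_cases h0 : ∃ m ∈ I, c' 0 m ≠ 0
    · -- case 1
      set T : Finset (Fin n → ℕ) := I.filter (fun m => c' 0 m ≠ 0) with hT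
      obtain ⟨m0, hm0I, hm0⟩ := h0
      have hTne : T.Nonempty := ⟨m0, Finset.mem_filter.2 ⟨hm0I, hm0⟩⟩
      have hTcard : T.card ≤ 2 ^ ℓ - 1 :=
        le_trans (le_trans (Finset.card_filter_le _ _) (Finset.card_image_le)) hcard
      obtain ⟨a', ha'supp, ha'sum⟩ := IH ℓ hℓ T (c' 0)
        hTne (fun m hm => (Finset.mem_filter.1 hm).2) hTcard
      refine ⟨Fin.snoc a' 0, ?_, ?_⟩
      · rw [card_filter_snoc]; simpa using ha'supp
      · rw [← identity a' 0]
        have : ∑ m ∈ I, c' 0 m * ∏ i, (Nat.choose (m i) (a' i) : F)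
            = ∑ m ∈ T, c' 0 m * ∏ i, (Nat.choose (m i) (a' i) : F) := by
          refine (Finset.sum_subset (Finset.filter_subset _ _) ?_).symm
          intro m hmI hmT
          have : c' 0 m = 0 := by
            by_contra hne0
            exact hmT (Finset.mem_filter.2 ⟨hmI, hne0⟩)
          rw [this, zero_mul]
        rw [this]
        exact ha'sum
    · -- case 2
      push_neg at h0
      -- every fiber has at least 2 elements
      have hfib : ∀ m ∈ I, 2 ≤ (S.filter (fun b => Fin.init b = m)).card := by
        intro m hm
        obtain ⟨b, hbS, hbm⟩ := Finset.mem_image.1 hm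
        by_contra hlt
        push_neg at hlt
        interval_cases h : (S.filter (fun b => Fin.init b = m)).card
        · have : b ∈ S.filter (fun b => Fin.init b = m) := Finset.mem_filter.2 ⟨hbS, hbm⟩
          simp [Finset.card_eq_zero.1 h] at this
        · obtain ⟨b0, hb0⟩ := Finset.card_eq_one.1 h
          have hbmem : b ∈ S.filter (fun b => Fin.init b = m) := Finset.mem_filter.2 ⟨hbS, hbm⟩
          rw [hb0] at hbmem
          have hbb0 : b = b0 := Finset.mem_singleton.1 hbmem
          have := h0 m hm
          rw [hc'] at this
          simp only at this
          rw [hb0, Finset.sum_singleton] at this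
          rw [← hbb0] at this
          simp at this
          exact hc b hbS this
      have hIcard2 : 2 * I.card ≤ S.card := by
        rw [Finset.card_eq_sum_card_fiberwise (fun b hb => Finset.mem_image_of_mem Fin.init hb)]
        calc 2 * I.card = ∑ _m ∈ I, 2 := by rw [Finset.sum_const, smul_eq_mul, mul_comm]
        _ ≤ _ := Finset.sum_le_sum hfib
      have hIne : I.Nonempty := hne.image _
      have hpow : 2 ^ ℓ = 2 * 2 ^ (ℓ - 1) := by
        rw [← pow_succ']
        congr 1
        omega
      have hlt : 2 * I.card < 2 * 2 ^ (ℓ - 1) := by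
        calc 2 * I.card ≤ S.card := hIcard2
        _ ≤ 2 ^ ℓ - 1 := hcard
        _ < 2 ^ ℓ := Nat.sub_lt (Nat.two_pow_pos ℓ) one_pos
        _ = 2 * 2 ^ (ℓ - 1) := hpow
      have hlt2 : I.card < 2 ^ (ℓ - 1) := by omega
      have hIcard : I.card ≤ 2 ^ (ℓ - 1) - 1 := Nat.le_sub_one_of_lt hlt2
      have hℓ1 : 1 ≤ ℓ - 1 := by
        have h1 : 1 ≤ I.card := Finset.card_pos.2 hIne
        by_contra h
        have hl0 : ℓ - 1 = 0 := by omega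
        rw [hl0, pow_zero] at hIcard
        omega
      -- find m and j ≥ 1 with c' j m ≠ 0
      obtain ⟨m1, hm1⟩ := hIne
      set P : Finset (Fin (n+1) → ℕ) := S.filter (fun b => Fin.init b = m1) with hP
      have hPcard : 2 ≤ P.card := hfib m1 hm1
      set E : Finset ℕ := P.image (fun b => b (Fin.last n)) with hE
      have hlastinj : Set.InjOn (fun b : Fin (n+1) → ℕ => b (Fin.last n)) ↑P := by
        intro x hx y hy hxy
        have hx' : Fin.init x = m1 := (Finset.mem_filter.1 (Finset.mem_coe.1 hx)).2
        have hy' : Fin.init y = m1 := (Finset.mem_filter.1 (Finset.mem_coe.1 hy)).2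
        have hxy' : x (Fin.last n) = y (Fin.last n) := hxy
        rw [← Fin.snoc_init_self x, ← Fin.snoc_init_self y, hx', hy', hxy']
      have hEcard : 2 ≤ E.card := by
        rw [hE, Finset.card_image_of_injOn hlastinj]; exact hPcard
      have hEne : E.Nonempty := Finset.card_pos.1 (by omega)
      set j := E.max' hEne with hj
      have hjmem : j ∈ E := E.max'_mem hEne
      obtain ⟨b0, hb0P, hb0j⟩ := Finset.mem_image.1 hjmem
      have hcj : c' j m1 = c b0 := by
        rw [hc']
        simp only
        rw [← hP]
        rw [Finset.sum_eq_single b0]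
        · rw [hb0j]; simp
        · intro b hb hbne
          have hble : b (Fin.last n) ≤ j := E.le_max' _ (Finset.mem_image_of_mem _ hb)
          have hblt : b (Fin.last n) < j := by
            rcases lt_or_eq_of_le hble with h | h
            · exact h
            · exact absurd (hlastinj hb hb0P (h.trans hb0j.symm)) hbne
          rw [Nat.choose_eq_zero_of_lt hblt]
          simp
        · intro h; exact absurd hb0P h
      have hcjne : c' j m1 ≠ 0 := by
        rw [hcj]; exact hc b0 (Finset.mem_filter.1 hb0P).1
      have hjpos : 1 ≤ j := by
        by_contra h
        have hj0 : j = 0 := by omega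
        have := h0 m1 hm1
        rw [← hj0] at this
        -- c' j m1 = c' 0 m1 = 0 contradiction
        exact hcjne this
      -- apply IH at ℓ - 1
      set T : Finset (Fin n → ℕ) := I.filter (fun m => c' j m ≠ 0) with hT
      have hTne : T.Nonempty := ⟨m1, Finset.mem_filter.2 ⟨hm1, hcjne⟩⟩
      have hTcard : T.card ≤ 2 ^ (ℓ - 1) - 1 :=
        le_trans (Finset.card_filter_le _ _) hIcard
      obtain ⟨a', ha'supp, ha'sum⟩ := IH (ℓ - 1) hℓ1 T (c' j)
        hTne (fun m hm => (Finset.mem_filter.1 hm).2) hTcard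
      refine ⟨Fin.snoc a' j, ?_, ?_⟩
      · rw [card_filter_snoc]
        have : ¬ j = 0 := by omega
        rw [if_neg this]
        omega
      · rw [← identity a' j]
        have : ∑ m ∈ I, c' j m * ∏ i, (Nat.choose (m i) (a' i) : F)
            = ∑ m ∈ T, c' j m * ∏ i, (Nat.choose (m i) (a' i) : F) := by
          refine (Finset.sum_subset (Finset.filter_subset _ _) ?_).symm
          intro m hmI hmT
          have : c' j m = 0 := by
            by_contra hne0
            exact hmT (Finset.mem_filter.2 ⟨hmI, hne0⟩)
          rw [this, zero_mul]
        rw [this]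
        exact ha'sum

/-- Lemma 5.3 of the paper, transfer matrix: let `T_ℓ` be the `M_ℓ × M`
matrix whose entry at row `a` and column `b` is `∏ᵢ C(bᵢ, aᵢ)`, where `M = {0,…,d}^n` and
`M_ℓ ⊆ M` are the exponents of support `< ℓ`. Then any `≤ 2^ℓ - 1` columns of `T_ℓ` are
`F`-linearly independent. -/
theorem transfer_matrix_columns_linearIndependent
    {F : Type*} [Field F] {n d ℓ : ℕ} (hn : 1 ≤ n) (hd : 1 ≤ d) (hl : 1 ≤ ℓ)
    (S : Finset (Fin n →₀ ℕ)) (hS : ∀ b ∈ S, ∀ i, b i ≤ d)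
    (hcard : S.card ≤ 2 ^ ℓ - 1) :
    LinearIndependent F
      (fun b : S =>
        fun a : {a : Fin n →₀ ℕ // (∀ i, a i ≤ d) ∧ a.support.card < ℓ} =>
          ((∏ i, Nat.choose (b.1 i) (a.1 i) : ℕ) : F)) := by
  classical
  rw [Fintype.linearIndependent_iff]
  intro g hg b
  by_contra hgb
  set c : (Fin n → ℕ) → F := fun f =>
    if h : (Finsupp.equivFunOnFinite.symm f) ∈ S then g ⟨_, h⟩ else 0 with hcdef
  set S' : Finset (Fin n → ℕ) :=
    (S.attach.filter (fun b' => g b' ≠ 0)).image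
      (fun b' : {x // x ∈ S} => (b'.1 : Fin n → ℕ)) with hS'
  have hmemc : ∀ b' : {x // x ∈ S}, c ⇑b'.1 = g b' := by
    intro b'
    rw [hcdef]
    simp only [Finsupp.equivFunOnFinite_symm_coe]
    rw [dif_pos b'.2]
  have hne : S'.Nonempty :=
    ⟨⇑b.1, Finset.mem_image.2 ⟨b, Finset.mem_filter.2 ⟨Finset.mem_attach _ _, hgb⟩, rfl⟩⟩
  have hcS' : ∀ f ∈ S', c f ≠ 0 := by
    intro f hf
    obtain ⟨b', hb', rfl⟩ := Finset.mem_image.1 hf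
    rw [hmemc]
    exact (Finset.mem_filter.1 hb').2
  have hcard' : S'.card ≤ 2 ^ ℓ - 1 := by
    calc S'.card ≤ (S.attach.filter (fun b' => g b' ≠ 0)).card := Finset.card_image_le
    _ ≤ S.attach.card := Finset.card_filter_le _ _
    _ = S.card := Finset.card_attach
    _ ≤ 2 ^ ℓ - 1 := hcard
  obtain ⟨a, hasupp, hasum⟩ := key_transfer n ℓ hl S' c hne hcS' hcard'
  have had : ∀ i, a i ≤ d := by
    by_contra hex
    push_neg at hex
    obtain ⟨i0, hi0⟩ := hex
    apply hasum
    apply Finset.sum_eq_zero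
    intro f hf
    obtain ⟨b', _, rfl⟩ := Finset.mem_image.1 hf
    have hb'd : b'.1 i0 ≤ d := hS b'.1 b'.2 i0
    have hz : (Nat.choose (b'.1 i0) (a i0) : F) = 0 := by
      rw [Nat.choose_eq_zero_of_lt (lt_of_le_of_lt hb'd hi0)]
      exact Nat.cast_zero
    rw [Finset.prod_eq_zero (Finset.mem_univ i0) hz, mul_zero]
  set A : Fin n →₀ ℕ := Finsupp.equivFunOnFinite.symm a with hA
  have hAa : ∀ i, A i = a i := fun i => rfl
  have hAsupp : A.support.card < ℓ := by
    have hseq : A.support = Finset.univ.filter fun i => a i ≠ 0 := by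
      ext i
      simp [Finsupp.mem_support_iff, hAa]
    rw [hseq]
    exact hasupp
  have h := congrFun hg ⟨A, fun i => (hAa i ▸ had i), hAsupp⟩
  simp only [Finset.sum_apply, Pi.smul_apply, smul_eq_mul, Pi.zero_apply,
    Finset.univ_eq_attach, Nat.cast_prod, hAa] at h
  apply hasum
  have e1 : ∑ f ∈ S', c f * ∏ i, (Nat.choose (f i) (a i) : F)
      = ∑ b' ∈ S.attach.filter (fun b' => g b' ≠ 0),
          g b' * ∏ i, (Nat.choose (b'.1 i) (a i) : F) := by
    rw [hS', Finset.sum_image (fun x _ y _ hxy => Subtype.ext (DFunLike.coe_injective hxy))]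
    exact Finset.sum_congr rfl fun b' _ => by rw [hmemc]
  have e2 : ∑ b' ∈ S.attach.filter (fun b' => g b' ≠ 0),
        g b' * ∏ i, (Nat.choose (b'.1 i) (a i) : F)
      = ∑ b' ∈ S.attach, g b' * ∏ i, (Nat.choose (b'.1 i) (a i) : F) := by
    refine Finset.sum_subset (Finset.filter_subset _ _) ?_
    intro x hx hnx
    have : g x = 0 := by
      by_contra hgx
      exact hnx (Finset.mem_filter.2 ⟨hx, hgx⟩)
    rw [this, zero_mul]
  rw [e1, e2]
  exact h
end

section
/- Let F be a field, A an m×m' matrix polynomial in F[x_1,…,x_n], and {f_1(t),…,f_N(t)} ⊆ F[t]^n a finite family of n-tuples of univariate polynomials. Let α_1,…,α_N be distinct elements of F, and let L(y,t) ∈ F[y,t]^n be the Lagrange interpolation of the family: L_j = Σ_{i∈[N]} f_{i,j}(t)·∏_{i'≠i} (y − α_{i'})/(α_i − α_{i'}), so that L(α_i, t) = f_i(t) for each i. If there exists i ∈ [N] such that A(x + f_i(t)) is ℓ-concentrated over F(t), then A(x + L(y,t)) is ℓ-concentrated over the rational function field F(y,t). -/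
set_option maxHeartbeats 1000000
set_option synthInstance.maxHeartbeats 400000

noncomputable section LagrangeConcAux

namespace LagrangeConcAux

section MvPart

open MvPolynomial Matrix

variable {n m m' : ℕ} {K : Type*} [CommRing K]

/-- matrix of coefficients of a matrix polynomial -/
def cM (Q : Matrix (Fin m) (Fin m') (MvPolynomial (Fin n) K)) (a : Fin n →₀ ℕ) :
    Matrix (Fin m) (Fin m') K :=
  Matrix.of fun r c => (Q r c).coeff a

/-- shift of a matrix polynomial -/
def shM (g : Fin n → K) (Q : Matrix (Fin m) (Fin m') (MvPolynomial (Fin n) K)) :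
    Matrix (Fin m) (Fin m') (MvPolynomial (Fin n) K) :=
  Q.map (aeval fun i => X i + C (g i))

lemma coeff_aeval_shift (g : Fin n → K) (q : MvPolynomial (Fin n) K) (a : Fin n →₀ ℕ) :
    (aeval (fun i => X i + C (g i)) q).coeff a
      = ∑ b ∈ q.support, q.coeff b *
          (aeval (fun i => X i + C (g i)) (monomial b (1:K))).coeff a := by
  conv_lhs => rw [q.as_sum]
  rw [map_sum, MvPolynomial.coeff_sum]
  refine Finset.sum_congr rfl fun b hb => ?_
  have h1 : (monomial b (q.coeff b)) = C (q.coeff b) * monomial b 1 := by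
    rw [C_mul_monomial, mul_one]
  rw [h1, _root_.map_mul, aeval_C, MvPolynomial.algebraMap_eq, MvPolynomial.coeff_C_mul]

lemma cM_shM_mem_span (g : Fin n → K) (Q : Matrix (Fin m) (Fin m') (MvPolynomial (Fin n) K))
    (a : Fin n →₀ ℕ) :
    cM (shM g Q) a ∈ Submodule.span K (Set.range (cM Q)) := by
  classical
  set T : Finset (Fin n →₀ ℕ) :=
    Finset.univ.biUnion (fun rc : Fin m × Fin m' => (Q rc.1 rc.2).support) with hT
  have key : cM (shM g Q) a
      = ∑ b ∈ T, ((aeval (fun i => X i + C (g i)) (monomial b (1:K))).coeff a) • cM Q b := by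
    ext r c
    have hsub : (Q r c).support ⊆ T := fun b hb =>
      Finset.mem_biUnion.2 ⟨(r, c), Finset.mem_univ _, hb⟩
    rw [Matrix.sum_apply]
    simp only [cM, shM, Matrix.map_apply, Matrix.of_apply, Matrix.smul_apply, smul_eq_mul]
    rw [coeff_aeval_shift]
    rw [Finset.sum_subset hsub]
    · exact Finset.sum_congr rfl fun b _ => mul_comm _ _
    · intro b _ hb
      rw [MvPolynomial.notMem_support_iff.mp hb, zero_mul]
  rw [key]
  exact Submodule.sum_mem _ fun b _ =>
    Submodule.smul_mem _ _ (Submodule.subset_span ⟨b, rfl⟩)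

lemma shM_neg_shM (g : Fin n → K) (Q : Matrix (Fin m) (Fin m') (MvPolynomial (Fin n) K)) :
    shM (fun i => -(g i)) (shM g Q) = Q := by
  have hcomp : ∀ q : MvPolynomial (Fin n) K,
      aeval (fun i => X i + C (-(g i))) (aeval (fun i => X i + C (g i)) q) = q := by
    intro q
    have : ((aeval (fun i => X i + C (-(g i)))).comp
        (aeval (fun i => X i + C (g i))) : MvPolynomial (Fin n) K →ₐ[K] _)
        = AlgHom.id K (MvPolynomial (Fin n) K) := by
      apply MvPolynomial.algHom_ext
      intro i
      simp [map_add, aeval_X, aeval_C, MvPolynomial.algebraMap_eq, map_neg]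
    exact AlgHom.congr_fun this q
  refine Matrix.ext fun r c => ?_
  simp only [shM, Matrix.map_apply]
  exact hcomp (Q r c)

lemma span_cM_shM (g : Fin n → K) (Q : Matrix (Fin m) (Fin m') (MvPolynomial (Fin n) K)) :
    Submodule.span K (Set.range (cM (shM g Q))) = Submodule.span K (Set.range (cM Q)) := by
  apply le_antisymm
  · rw [Submodule.span_le]
    rintro _ ⟨a, rfl⟩
    exact cM_shM_mem_span g Q a
  · rw [Submodule.span_le]
    rintro _ ⟨a, rfl⟩
    have h := cM_shM_mem_span (fun i => -(g i)) (shM g Q) a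
    rwa [shM_neg_shM] at h

variable {K' : Type*} [CommRing K']

lemma aeval_shift_map (h : K →+* K') (g : Fin n → K) (q : MvPolynomial (Fin n) K) :
    MvPolynomial.map h (aeval (fun i => X i + C (g i)) q)
      = aeval (fun i => X i + C (h (g i))) (MvPolynomial.map h q) := by
  rw [MvPolynomial.map_aeval, MvPolynomial.aeval_def, MvPolynomial.eval₂_map]
  have h1 : ((MvPolynomial.map h).comp (algebraMap K (MvPolynomial (Fin n) K)))
      = (algebraMap K' (MvPolynomial (Fin n) K')).comp h := by
    ext k
    simp [MvPolynomial.algebraMap_eq]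
  have h2 : (fun i => MvPolynomial.map h (X i + C (g i)))
      = fun i => (X i : MvPolynomial (Fin n) K') + C (h (g i)) := by
    funext i
    simp
  rw [MvPolynomial.eval₂Hom_congr h1 h2 rfl]
  rfl

lemma cM_map (h : K →+* K') (Q : Matrix (Fin m) (Fin m') (MvPolynomial (Fin n) K))
    (a : Fin n →₀ ℕ) :
    cM (Q.map (MvPolynomial.map h)) a = (cM Q a).map h := by
  ext r c
  simp [cM, MvPolynomial.coeff_map]

lemma shM_map (h : K →+* K') (g : Fin n → K)
    (Q : Matrix (Fin m) (Fin m') (MvPolynomial (Fin n) K)) :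
    shM (fun i => h (g i)) (Q.map (MvPolynomial.map h)) = (shM g Q).map (MvPolynomial.map h) := by
  refine Matrix.ext fun r c => ?_
  simp only [shM, Matrix.map_apply]
  exact (aeval_shift_map h g (Q r c)).symm

variable {m m' : ℕ}

/-- entrywise matrix map as a semilinear map -/
def mmapSL {K K' : Type*} [CommRing K] [CommRing K'] (h : K →+* K') :
    Matrix (Fin m) (Fin m') K →ₛₗ[h] Matrix (Fin m) (Fin m') K' where
  toFun M := M.map h
  map_add' M N := by
    refine Matrix.ext fun r c => ?_
    simp [Matrix.map_apply]
  map_smul' k M := by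
    refine Matrix.ext fun r c => ?_
    simp [Matrix.map_apply, smul_eq_mul]

lemma mem_span_image_of_mem_span {K K' : Type*} [Field K] [Field K'] (h : K →+* K')
    {s : Set (Matrix (Fin m) (Fin m') K)} {x : Matrix (Fin m) (Fin m') K}
    (hx : x ∈ Submodule.span K s) :
    x.map h ∈ Submodule.span K' (mmapSL (m := m) (m' := m') h '' s) := by
  induction hx using Submodule.span_induction with
  | mem y hy => exact Submodule.subset_span ⟨y, hy, rfl⟩
  | zero =>
    have : (0 : Matrix (Fin m) (Fin m') K).map h = 0 := map_zero (mmapSL h)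
    rw [this]; exact Submodule.zero_mem _
  | add y z _ _ hy hz =>
    have : (y + z).map h = y.map h + z.map h := map_add (mmapSL h) y z
    rw [this]; exact Submodule.add_mem _ hy hz
  | smul k y _ hy =>
    have : (k • y).map h = h k • y.map h := (mmapSL h).map_smul' k y
    rw [this]; exact Submodule.smul_mem _ _ hy

lemma finrank_span_range_map_le {K K' : Type*} [Field K] [Field K'] (h : K →+* K')
    {ι : Type*} (v : ι → Matrix (Fin m) (Fin m') K) :
    Module.finrank K' (Submodule.span K' (Set.range fun b => (v b).map h))
      ≤ Module.finrank K (Submodule.span K (Set.range v)) := by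
  classical
  obtain ⟨s, hs_sub, hs_span, hs_li⟩ := exists_linearIndependent K (Set.range v)
  have hs_fin : s.Finite := hs_li.set_finite_of_isNoetherian
  haveI : Fintype s := hs_fin.fintype
  have hcard : Module.finrank K (Submodule.span K (Set.range v)) = s.toFinset.card := by
    rw [← hs_span, finrank_span_set_eq_card hs_li]
  have himg : ∀ b : ι, (v b).map h ∈
      Submodule.span K' (mmapSL (m := m) (m' := m') h '' s) := by
    intro b
    have : v b ∈ Submodule.span K s := by
      rw [hs_span]; exact Submodule.subset_span ⟨b, rfl⟩
    exact mem_span_image_of_mem_span h this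
  have hle : Submodule.span K' (Set.range fun b => (v b).map h)
      ≤ Submodule.span K' (mmapSL (m := m) (m' := m') h '' s) := by
    rw [Submodule.span_le]
    rintro _ ⟨b, rfl⟩
    exact himg b
  haveI : Fintype ((⇑(mmapSL (m := m) (m' := m') h)) '' s) := Set.fintypeImage s _
  calc Module.finrank K' (Submodule.span K' (Set.range fun b => (v b).map h))
      ≤ Module.finrank K' (Submodule.span K' (mmapSL (m := m) (m' := m') h '' s)) :=
        Submodule.finrank_mono hle
    _ ≤ (mmapSL (m := m) (m' := m') h '' s).toFinset.card := finrank_span_le_card _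
    _ ≤ s.toFinset.card := by
        rw [Set.toFinset_image]
        exact Finset.card_image_le
    _ = Module.finrank K (Submodule.span K (Set.range v)) := hcard.symm

end MvPart

section PolyPart

open Polynomial Matrix

variable {m m' : ℕ}

lemma li_transfer {K : Type*} [Field K] {ι : Type*} [Fintype ι]
    (v : ι → Matrix (Fin m) (Fin m') (Polynomial K)) (aa : K)
    (hli : LinearIndependent K fun b => (v b).map (Polynomial.eval aa)) :
    LinearIndependent (RatFunc K) fun b => (v b).map (algebraMap (Polynomial K) (RatFunc K)) := by
  classical
  rw [Fintype.linearIndependent_iff] at hli ⊢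
  intro g hg
  by_contra hne
  push_neg at hne
  obtain ⟨b₀, hb₀⟩ := hne
  set p : ι → Polynomial K := fun b =>
    (g b).num * ∏ b' ∈ Finset.univ.erase b, (g b').denom with hp
  have hpalg : ∀ b, algebraMap (Polynomial K) (RatFunc K) (p b)
      = g b * algebraMap (Polynomial K) (RatFunc K) (∏ b', (g b').denom) := by
    intro b
    have hnum : g b * algebraMap (Polynomial K) (RatFunc K) ((g b).denom)
        = algebraMap (Polynomial K) (RatFunc K) ((g b).num) := by
      have h2 := (div_eq_iff
        (RatFunc.algebraMap_ne_zero (RatFunc.denom_ne_zero (g b)))).mp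
        (RatFunc.num_div_denom (g b))
      rw [← h2]
    rw [← Finset.mul_prod_erase Finset.univ _ (Finset.mem_univ b), hp]
    simp only [_root_.map_mul]
    rw [← mul_assoc, hnum]
  have hg' : ∀ r c, (∑ b, g b * algebraMap (Polynomial K) (RatFunc K) (v b r c)) = 0 := by
    intro r c
    have h := congrFun (congrFun hg r) c
    simpa [Matrix.sum_apply, Matrix.smul_apply, Matrix.map_apply, smul_eq_mul] using h
  have hrel : ∀ r c, ∑ b, p b * (v b r c) = 0 := by
    intro r c
    apply RatFunc.algebraMap_injective K
    rw [map_sum, map_zero]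
    calc ∑ b, algebraMap (Polynomial K) (RatFunc K) (p b * v b r c)
        = ∑ b, (g b * algebraMap (Polynomial K) (RatFunc K) (v b r c)) *
            algebraMap (Polynomial K) (RatFunc K) (∏ b', (g b').denom) := by
          refine Finset.sum_congr rfl fun b _ => ?_
          rw [_root_.map_mul, hpalg b]; ring
      _ = (∑ b, g b * algebraMap (Polynomial K) (RatFunc K) (v b r c)) *
            algebraMap (Polynomial K) (RatFunc K) (∏ b', (g b').denom) := by
          rw [Finset.sum_mul]
      _ = 0 := by rw [hg' r c, zero_mul]
  have hp0 : p b₀ ≠ 0 := by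
    apply mul_ne_zero (RatFunc.num_ne_zero hb₀)
    rw [Finset.prod_ne_zero_iff]
    exact fun b' _ => RatFunc.denom_ne_zero (g b')
  set S : Finset ι := Finset.univ.filter fun b => p b ≠ 0 with hSdef
  have hS : S.Nonempty := ⟨b₀, Finset.mem_filter.2 ⟨Finset.mem_univ _, hp0⟩⟩
  obtain ⟨b₁, hb₁S, hmin⟩ := Finset.exists_min_image S
    (fun b => Polynomial.rootMultiplicity aa (p b)) hS
  set k := Polynomial.rootMultiplicity aa (p b₁) with hk
  have hdvd : ∀ b, (X - C aa) ^ k ∣ p b := by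
    intro b
    by_cases hb : p b = 0
    · simp [hb]
    · have hbS : b ∈ S := Finset.mem_filter.2 ⟨Finset.mem_univ _, hb⟩
      exact dvd_trans (pow_dvd_pow _ (hmin b hbS))
        (Polynomial.pow_rootMultiplicity_dvd (p b) aa)
  choose q hq using fun b => (hdvd b)
  have hq0 : ∀ r c, ∑ b, q b * (v b r c) = 0 := by
    intro r c
    have h1 : (X - C aa) ^ k * (∑ b, q b * v b r c) = 0 := by
      rw [Finset.mul_sum, ← hrel r c]
      refine Finset.sum_congr rfl fun b _ => ?_
      rw [hq b]; ring
    rcases mul_eq_zero.mp h1 with h | h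
    · exact absurd h (pow_ne_zero _ (Polynomial.X_sub_C_ne_zero aa))
    · exact h
  have heval : ∀ b, (q b).eval aa = 0 := by
    apply hli fun b => (q b).eval aa
    refine Matrix.ext fun r c => ?_
    have h := congrArg (Polynomial.eval aa) (hq0 r c)
    simpa [Polynomial.eval_finset_sum, Matrix.sum_apply, Matrix.smul_apply, smul_eq_mul,
      Matrix.map_apply] using h
  have hp1ne : p b₁ ≠ 0 := (Finset.mem_filter.mp hb₁S).2
  refine Polynomial.pow_rootMultiplicity_not_dvd hp1ne aa ?_
  rw [← hk, pow_succ, hq b₁]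
  exact mul_dvd_mul_left _ (Polynomial.dvd_iff_isRoot.mpr (heval b₁))

lemma lagrange_eval {F : Type*} [Field F] {N : ℕ}
    (α : Fin N → F) (hα : Function.Injective α) (i : Fin N)
    (fv : Fin N → Polynomial F)
    (Lj : Polynomial (Polynomial F))
    (hLj : Lj = ∑ i', Polynomial.C (fv i') *
      ∏ i'' ∈ Finset.univ.erase i',
        (Polynomial.C (Polynomial.C ((α i' - α i'')⁻¹)) *
          (Polynomial.X - Polynomial.C (Polynomial.C (α i''))))) :
    Polynomial.eval (algebraMap F (RatFunc F) (α i))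
      (Lj.map (algebraMap (Polynomial F) (RatFunc F)))
      = algebraMap (Polynomial F) (RatFunc F) (fv i) := by
  classical
  set ψ : F →+* RatFunc F := (algebraMap F (RatFunc F) : F →+* RatFunc F) with hψ
  set φ : Polynomial F →+* RatFunc F := (algebraMap (Polynomial F) (RatFunc F)) with hφ
  have hφC : ∀ e : F, φ (Polynomial.C e) = ψ e := by
    intro e
    rw [hψ, IsScalarTower.algebraMap_apply F (Polynomial F) (RatFunc F) e,
      Polynomial.algebraMap_eq]
  rw [hLj, Polynomial.eval_map]
  rw [Polynomial.eval₂_finset_sum]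
  rw [Finset.sum_eq_single i]
  · rw [eval₂_mul, eval₂_C, eval₂_finset_prod]
    rw [Finset.prod_congr rfl (g := fun _ => (1 : RatFunc F)) ?_, Finset.prod_const_one, mul_one]
    intro i'' hi''
    rw [eval₂_mul, eval₂_sub, eval₂_X, eval₂_C, eval₂_C, hφC, hφC]
    rw [← map_sub, ← _root_.map_mul]
    rw [inv_mul_cancel₀ (sub_ne_zero.mpr fun h => (Finset.mem_erase.mp hi'').1 (hα h).symm), _root_.map_one]
  · intro i' _ hi'
    rw [eval₂_mul, eval₂_finset_prod]
    rw [Finset.prod_eq_zero (Finset.mem_erase.mpr ⟨fun h => hi' h.symm, Finset.mem_univ i⟩)]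
    · rw [mul_zero]
    rw [eval₂_mul, eval₂_sub, eval₂_X, eval₂_C, eval₂_C, hφC, hφC, sub_self, mul_zero]
  · intro h
    exact absurd (Finset.mem_univ i) h

end PolyPart

section MainAux

open Matrix

lemma main_aux {F : Type*} [Field F] {n m m' : ℕ}
    (A : Matrix (Fin m) (Fin m') (MvPolynomial (Fin n) F))
    {K : Type*} [Field K] [Algebra F K]
    (gR : Fin n → Polynomial K) (aa : K) (ℓ : ℕ)
    (hconc : ∀ a : Fin n →₀ ℕ,
      cM (shM (fun j => Polynomial.eval aa (gR j))
          (A.map (MvPolynomial.map (algebraMap F K)))) a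
        ∈ Submodule.span K
          (cM (shM (fun j => Polynomial.eval aa (gR j))
              (A.map (MvPolynomial.map (algebraMap F K))))
            '' {b : Fin n →₀ ℕ | b.support.card < ℓ})) :
    ∀ a : Fin n →₀ ℕ,
      cM (shM (fun j => algebraMap (Polynomial K) (RatFunc K) (gR j))
          (A.map (MvPolynomial.map (algebraMap F (RatFunc K))))) a
        ∈ Submodule.span (RatFunc K)
          (cM (shM (fun j => algebraMap (Polynomial K) (RatFunc K) (gR j))
              (A.map (MvPolynomial.map (algebraMap F (RatFunc K)))))
            '' {b : Fin n →₀ ℕ | b.support.card < ℓ}) := by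
  classical
  set Q₁ := A.map (MvPolynomial.map (algebraMap F K)) with hQ₁
  set QR := A.map (MvPolynomial.map (algebraMap F (Polynomial K))) with hQR
  set Q₂ := A.map (MvPolynomial.map (algebraMap F (RatFunc K))) with hQ₂
  set g₁ : Fin n → K := fun j => Polynomial.eval aa (gR j) with hg₁
  set g₂ : Fin n → RatFunc K := fun j => algebraMap (Polynomial K) (RatFunc K) (gR j) with hg₂
  set cf₁ := cM (shM g₁ Q₁) with hcf₁
  set cf₂ := cM (shM g₂ Q₂) with hcf₂
  set PsA := cM (shM gR QR) with hPsA
  -- Q₁ and Q₂ as images of QR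
  have hcomp1 : (Polynomial.evalRingHom aa).comp (algebraMap F (Polynomial K))
      = algebraMap F K := by
    refine RingHom.ext fun x => ?_
    rw [RingHom.comp_apply, IsScalarTower.algebraMap_apply F K (Polynomial K) x,
      Polynomial.algebraMap_eq]
    simp
  have hcomp2 : (algebraMap (Polynomial K) (RatFunc K)).comp (algebraMap F (Polynomial K))
      = algebraMap F (RatFunc K) := by
    refine RingHom.ext fun x => ?_
    rw [RingHom.comp_apply, ← IsScalarTower.algebraMap_apply F (Polynomial K) (RatFunc K) x]
  have hcomp3 : (algebraMap K (RatFunc K)).comp (algebraMap F K)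
      = algebraMap F (RatFunc K) := by
    refine RingHom.ext fun x => ?_
    rw [RingHom.comp_apply, IsScalarTower.algebraMap_apply K (Polynomial K) (RatFunc K)
      ((algebraMap F K) x), ← IsScalarTower.algebraMap_apply F K (Polynomial K) x,
      ← IsScalarTower.algebraMap_apply F (Polynomial K) (RatFunc K) x]
  have hQ1R : Q₁ = QR.map (MvPolynomial.map (Polynomial.evalRingHom aa)) := by
    refine Matrix.ext fun r c => ?_
    rw [hQ₁, hQR]
    simp only [Matrix.map_apply]
    rw [MvPolynomial.map_map, hcomp1]
  have hQ2R : Q₂ = QR.map (MvPolynomial.map (algebraMap (Polynomial K) (RatFunc K))) := by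
    refine Matrix.ext fun r c => ?_
    rw [hQ₂, hQR]
    simp only [Matrix.map_apply]
    rw [MvPolynomial.map_map, hcomp2]
  -- coefficient matrices as maps of the polynomial-level ones
  have hcfEval : ∀ a, cf₁ a = (PsA a).map (Polynomial.eval aa) := by
    intro a
    rw [hcf₁, hQ1R, hg₁]
    have h1 : (fun j => Polynomial.eval aa (gR j))
        = fun j => Polynomial.evalRingHom aa (gR j) := rfl
    rw [h1, shM_map (Polynomial.evalRingHom aa) gR QR, cM_map, hPsA,
      Polynomial.coe_evalRingHom]
  have hcfRat : ∀ a, cf₂ a = (PsA a).map (algebraMap (Polynomial K) (RatFunc K)) := by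
    intro a
    rw [hcf₂, hQ2R, hg₂, shM_map (algebraMap (Polynomial K) (RatFunc K)) gR QR, cM_map, hPsA]
  -- spans over K
  set Vlow₁ := Submodule.span K (cf₁ '' {b : Fin n →₀ ℕ | b.support.card < ℓ}) with hVlow₁
  have h2 : Vlow₁ = Submodule.span K (Set.range cf₁) := by
    apply le_antisymm
    · exact Submodule.span_mono (Set.image_subset_range _ _)
    · rw [Submodule.span_le]
      rintro _ ⟨a, rfl⟩
      exact hconc a
  have h1 : Submodule.span K (Set.range cf₁) = Submodule.span K (Set.range (cM Q₁)) :=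
    span_cM_shM g₁ Q₁
  -- pick a basis of Vlow₁ among the generators
  obtain ⟨s, hs_sub, hs_span, hs_li⟩ :=
    exists_linearIndependent K (cf₁ '' {b : Fin n →₀ ℕ | b.support.card < ℓ})
  have hs_fin : s.Finite := hs_li.set_finite_of_isNoetherian
  haveI : Fintype s := hs_fin.fintype
  have hcard : Module.finrank K Vlow₁ = Fintype.card s := by
    rw [hVlow₁, ← hs_span, finrank_span_set_eq_card hs_li, Set.toFinset_card]
  choose bsel hbsel1 hbsel2 using fun x : s => (Set.mem_image _ _ _).mp (hs_sub x.2)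
  -- lift to linear independence over RatFunc K
  set w : s → Matrix (Fin m) (Fin m') (Polynomial K) := fun x => PsA (bsel x) with hw
  have li₁ : LinearIndependent K fun x : s => (w x).map (Polynomial.eval aa) := by
    have : (fun x : s => (w x).map (Polynomial.eval aa))
        = ((↑) : s → Matrix (Fin m) (Fin m') K) := by
      funext x
      rw [hw, ← hcfEval (bsel x), hbsel2 x]
    rw [this]
    exact hs_li
  have li₂ := li_transfer w aa li₁
  have hw2 : ∀ x : s, (w x).map (algebraMap (Polynomial K) (RatFunc K)) = cf₂ (bsel x) :=
    fun x => (hcfRat (bsel x)).symm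
  -- spans over RatFunc K
  set Vlow₂ := Submodule.span (RatFunc K)
    (cf₂ '' {b : Fin n →₀ ℕ | b.support.card < ℓ}) with hVlow₂
  set Vall₂ := Submodule.span (RatFunc K) (Set.range (cM Q₂)) with hVall₂
  have h1₂ : Submodule.span (RatFunc K) (Set.range cf₂) = Vall₂ := span_cM_shM g₂ Q₂
  have hmem₂ : ∀ x : s, cf₂ (bsel x) ∈ Vlow₂ := fun x =>
    Submodule.subset_span ⟨bsel x, hbsel1 x, rfl⟩
  -- finrank chain
  have hcard₂ : Fintype.card s ≤ Module.finrank (RatFunc K) Vlow₂ := by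
    set w' : s → Vlow₂ := fun x => ⟨cf₂ (bsel x), hmem₂ x⟩ with hw'
    have li_w' : LinearIndependent (RatFunc K) w' := by
      apply LinearIndependent.of_comp Vlow₂.subtype
      have : (Vlow₂.subtype ∘ w') = fun x : s => cf₂ (bsel x) := rfl
      rw [this]
      have h3 : (fun x : s => cf₂ (bsel x))
          = fun x : s => (w x).map (algebraMap (Polynomial K) (RatFunc K)) := by
        funext x; exact (hw2 x).symm
      rw [h3]
      exact li₂
    exact li_w'.fintype_card_le_finrank
  have hBC : Module.finrank (RatFunc K) Vall₂ ≤ Module.finrank K (Submodule.span K (Set.range (cM Q₁))) := by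
    have hQ21 : Q₂ = Q₁.map (MvPolynomial.map (algebraMap K (RatFunc K))) := by
      refine Matrix.ext fun r c => ?_
      rw [hQ₂, hQ₁]
      simp only [Matrix.map_apply]
      rw [MvPolynomial.map_map, hcomp3]
    have hmapped : (fun a => (cM Q₁ a).map (algebraMap K (RatFunc K))) = cM Q₂ := by
      funext a
      rw [hQ21, cM_map (algebraMap K (RatFunc K)) Q₁ a]
    have := finrank_span_range_map_le (algebraMap K (RatFunc K)) (cM Q₁)
    rwa [hmapped] at this
  have hchain : Module.finrank (RatFunc K) Vall₂ ≤ Module.finrank (RatFunc K) Vlow₂ := by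
    refine le_trans hBC (le_trans ?_ hcard₂)
    rw [← h1, ← h2, hcard]
  have hle₂ : Vlow₂ ≤ Vall₂ := by
    rw [← h1₂]
    exact Submodule.span_mono (Set.image_subset_range _ _)
  have heq : Vlow₂ = Vall₂ := Submodule.eq_of_le_of_finrank_le hle₂ hchain
  intro a
  show cf₂ a ∈ Vlow₂
  rw [heq, ← h1₂]
  exact Submodule.subset_span ⟨a, rfl⟩

end MainAux

end LagrangeConcAux

end LagrangeConcAux



open MvPolynomial Matrix

/-- Lemma 5.5 of the paper, Lagrange interpolation of a family of shifts:
let `L(y,t) ∈ F[y,t]^n` be the Lagrange interpolation of the family `f₁(t), …, f_N(t)`, i.e.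
`L_j = ∑ᵢ f_{i,j}(t) ∏_{i'≠i} (y - α_{i'})/(α_i - α_{i'})`. If for some `i` the shifted matrix
polynomial `A(x + fᵢ(t))` is `ℓ`-concentrated over `F(t)`, then `A(x + L(y,t))` is
`ℓ`-concentrated over `F(y,t)`. Here `F[y,t]` is encoded as `Polynomial (Polynomial F)` with
`y` the outer and `t` the inner variable, and `F(y,t)` as `RatFunc (RatFunc F)`. -/
theorem lagrange_interpolation_preserves_concentration
    {F : Type*} [Field F] {n m m' N : ℕ}
    (A : Matrix (Fin m) (Fin m') (MvPolynomial (Fin n) F))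
    (f : Fin N → Fin n → Polynomial F)
    (α : Fin N → F) (hα : Function.Injective α)
    (ℓ : ℕ)
    (L : Fin n → Polynomial (Polynomial F))
    (hL : ∀ j, L j = ∑ i, Polynomial.C (f i j) *
      ∏ i' ∈ Finset.univ.erase i,
        (Polynomial.C (Polynomial.C ((α i - α i')⁻¹)) *
          (Polynomial.X - Polynomial.C (Polynomial.C (α i')))))
    (hconc : ∃ i, Concentrated (RatFunc F) ℓ
      (fun a => Matrix.of fun r c => (shiftBy (f i) (A r c)).coeff a)) :
    Concentrated (RatFunc (RatFunc F)) ℓ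
      (fun a => Matrix.of fun r c => (shiftBy₂ L (A r c)).coeff a) := by
  classical
  obtain ⟨i, hconc⟩ := hconc
  set gR : Fin n → Polynomial (RatFunc F) :=
    fun j => (L j).map (algebraMap (Polynomial F) (RatFunc F)) with hgR
  set aa : RatFunc F := algebraMap F (RatFunc F) (α i) with haa
  have hLag : ∀ j, Polynomial.eval aa (gR j)
      = algebraMap (Polynomial F) (RatFunc F) (f i j) := fun j =>
    LagrangeConcAux.lagrange_eval α hα i (fun i' => f i' j) (L j) (hL j)
  have hgf : (fun j => Polynomial.eval aa (gR j))
      = fun j => algebraMap (Polynomial F) (RatFunc F) (f i j) := funext hLag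
  have hid₁ : (fun a : Fin n →₀ ℕ =>
        (Matrix.of fun r c => (shiftBy (f i) (A r c)).coeff a : Matrix (Fin m) (Fin m') (RatFunc F)))
      = LagrangeConcAux.cM (LagrangeConcAux.shM (fun j => Polynomial.eval aa (gR j))
          (A.map (MvPolynomial.map (algebraMap F (RatFunc F))))) := by
    rw [hgf]
    funext a
    refine Matrix.ext fun r c => ?_
    simp only [LagrangeConcAux.cM, LagrangeConcAux.shM, Matrix.map_apply, Matrix.of_apply,
      shiftBy]
    rw [MvPolynomial.aeval_map_algebraMap]
  have hid₂ : (fun a : Fin n →₀ ℕ =>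
        (Matrix.of fun r c => (shiftBy₂ L (A r c)).coeff a :
          Matrix (Fin m) (Fin m') (RatFunc (RatFunc F))))
      = LagrangeConcAux.cM (LagrangeConcAux.shM
          (fun j => algebraMap (Polynomial (RatFunc F)) (RatFunc (RatFunc F)) (gR j))
          (A.map (MvPolynomial.map (algebraMap F (RatFunc (RatFunc F)))))) := by
    funext a
    refine Matrix.ext fun r c => ?_
    simp only [LagrangeConcAux.cM, LagrangeConcAux.shM, Matrix.map_apply, Matrix.of_apply,
      shiftBy₂, hgR]
    rw [MvPolynomial.aeval_map_algebraMap]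
  have hconc' := hconc
  rw [Concentrated] at hconc'
  have hmain := LagrangeConcAux.main_aux A gR aa ℓ (fun a => by
    have h := hconc' a
    rw [congrFun hid₁ a, hid₁] at h
    exact h)
  rw [Concentrated]
  intro a
  rw [congrFun hid₂ a, hid₂]
  exact hmain a
end
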